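/- arXiv:1608.05272 — 2 statements merged into one kernel-verified Lean document; each statement's English description precedes it below -/
import Mathlib

section
/- Let C⊆S be a set of states in a stochastic game and let s,s'∈C. If state s leads in C to state s', then there exists a pure stationary strategy profile y such that P_{s,y}(ν_{{s'}} < ν_{C^c}) = 1, i.e., under y, starting from s, the play reaches s' before leaving C with probability 1. Consequently, for every nonempty D⊂C there is a pure stationary strategy profile that from any initial state in C∖D leads the play to D without leaving C, provided every state of C leads in C to every other state of C. -/
open Filter Topology
open scoped Classical

noncomputable section

/-- A probability distribution on a finite type, given as a vector of nonnegative
real numbers summing to one. -/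
def ProbVec (X : Type*) [Fintype X] : Type _ :=
  {p : X → ℝ // (∀ x, 0 ≤ p x) ∧ ∑ x, p x = 1}

instance instNonemptyProbVec {X : Type*} [Fintype X] [Nonempty X] : Nonempty (ProbVec X) := by
  refine ⟨⟨fun _ => (Fintype.card X : ℝ)⁻¹, fun _ => by positivity, ?_⟩⟩
  have h : (Fintype.card X : ℝ) ≠ 0 := Nat.cast_ne_zero.mpr Fintype.card_ne_zero
  simp [Finset.sum_const, Finset.card_univ, nsmul_eq_mul, mul_inv_cancel₀ h]

/-- The Dirac (pure) distribution concentrated at `x`. -/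
def pureDist {X : Type*} [Fintype X] (x : X) : ProbVec X :=
  ⟨fun y => if y = x then 1 else 0, fun y => by dsimp only; split <;> norm_num, by simp⟩

/-- An action profile: one action for each player. -/
abbrev ActProf {ι : Type*} (A : ι → Type*) := ∀ i, A i

/-- A finite history of a stochastic game: the list of past (state, action profile)
pairs, in reverse chronological order, together with the current state. -/
abbrev Hist (S : Type*) {ι : Type*} (A : ι → Type*) : Type _ := List (S × ActProf A) × S

/-- The product distribution on action profiles induced by a mixed action of each player. -/
def prodDist {ι : Type*} {A : ι → Type*} [Fintype ι] [DecidableEq ι] [∀ i, Fintype (A i)]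
    (x : ∀ i, ProbVec (A i)) : ProbVec (ActProf A) := by
  refine ⟨fun a => ∏ i, (x i).1 (a i),
    fun a => Finset.prod_nonneg fun i _ => (x i).2.1 _, ?_⟩
  rw [← Fintype.prod_sum (fun i (b : A i) => (x i).1 b)]
  simp [fun i => (x i).2.2]

/-- A multiplayer stochastic game with player set `ι`, state set `S`, and action
sets `A i` (the same at every state). `u` is the payoff function and `q` the
transition function. -/
structure StochGame (ι S : Type*) (A : ι → Type*) [Fintype ι] [DecidableEq ι]
    [Fintype S] [∀ i, Fintype (A i)] where
  u : ι → S → ActProf A → ℝ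
  q : S → ActProf A → S → ℝ
  q_nonneg : ∀ s a s', 0 ≤ q s a s'
  q_sum : ∀ s a, ∑ s', q s a s' = 1

namespace StochGame

variable {ι S : Type*} {A : ι → Type*} [Fintype ι] [DecidableEq ι] [Fintype S]
  [∀ i, Fintype (A i)] [Nonempty S] [∀ i, Nonempty (A i)]

variable (ι S A) in
/-- A correlated strategy: a map from finite histories to correlated mixed actions. -/
abbrev CorrStrategy := Hist S A → ProbVec (ActProf A)

variable (ι S A) in
/-- A (behavior) strategy profile: for each player, a map from finite histories to
mixed actions of that player. -/
abbrev Profile := ∀ i, Hist S A → ProbVec (A i)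

/-- The correlated strategy induced by a strategy profile. -/
def corrOf (σ : Profile ι S A) : CorrStrategy ι S A := fun h => prodDist (fun i => σ i h)

/-- A stationary strategy profile, determined by a mixed action of each player at each state. -/
def statProf (x : ∀ i, S → ProbVec (A i)) : Profile ι S A := fun i h => x i h.2

/-- A stationary correlated strategy, determined by a correlated mixed action at each state. -/
def statCorr (y : S → ProbVec (ActProf A)) : CorrStrategy ι S A := fun h => y h.2

/-- A strategy profile is stationary if each player's mixed action depends only on the
current state. -/
def IsStationary (σ : Profile ι S A) : Prop := ∃ x, σ = statProf x

/-- A strategy profile is pure stationary if each player plays a deterministic action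
depending only on the current state. -/
def IsPureStationary (σ : Profile ι S A) : Prop :=
  ∃ c : ∀ i, S → A i, σ = fun i h => pureDist (c i h.2)

/-- The continuation correlated strategy of `τ` after the finite history `h`. -/
def contC (τ : CorrStrategy ι S A) (h : Hist S A) : CorrStrategy ι S A :=
  fun h' => τ (h'.1 ++ h.1, h'.2)

variable (G : StochGame ι S A)

/-- The probability, under the correlated strategy `τ` with initial state `s1`, that
the play follows the given finite history (list of past (state, action) pairs in reverse
chronological order, then the current state). -/
def hprob (τ : CorrStrategy ι S A) (s1 : S) : List (S × ActProf A) → S → ℝ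
  | [], s => if s = s1 then 1 else 0
  | p :: l, s => hprob τ s1 l p.1 * (τ (l, p.1)).1 p.2 * G.q p.1 p.2 s

/-- The expected payoff of player `i` at stage `n+1` (so that `n` past stages have
elapsed) under the correlated strategy `τ` with initial state `s1`. -/
def stagePay (τ : CorrStrategy ι S A) (s1 : S) (i : ι) (n : ℕ) : ℝ :=
  ∑ f : Fin n → S × ActProf A, ∑ s : S,
    G.hprob τ s1 (List.ofFn f) s * ∑ a : ActProf A, (τ (List.ofFn f, s)).1 a * G.u i s a

/-- The `lam`-discounted payoff of player `i` at the initial state `s1` under the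
correlated strategy `τ`. -/
def disc (lam : ℝ) (i : ι) (s1 : S) (τ : CorrStrategy ι S A) : ℝ :=
  (1 - lam) * ∑' n : ℕ, lam ^ n * G.stagePay τ s1 i n

/-- The `lam`-discounted payoff of player `i` at the initial state `s1` under the
strategy profile `σ`. -/
def discP (lam : ℝ) (i : ι) (s1 : S) (σ : Profile ι S A) : ℝ :=
  G.disc lam i s1 (corrOf σ)

/-- Replace player `i`'s strategy in the profile `σ` by `τi`. -/
def replaceStrat (σ : Profile ι S A) (i : ι) (τi : Hist S A → ProbVec (A i)) :
    Profile ι S A :=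
  fun j => if h : j = i then cast (by rw [h]) τi else σ j

/-- The `lam`-discounted min-max value of player `i` at the initial state `s`. -/
def vlam (lam : ℝ) (i : ι) (s : S) : ℝ :=
  ⨅ σ : Profile ι S A, ⨆ τi : Hist S A → ProbVec (A i),
    G.discP lam i s (replaceStrat σ i τi)

/-- The uniform min-max value of player `i` at state `s`: the limit of the
`lam`-discounted min-max values as `lam → 1`. -/
def v1 (i : ι) (s : S) : ℝ := limUnder (𝓝[<] (1 : ℝ)) (fun lam => G.vlam lam i s)

/-- A correlated strategy is `w`-acceptable if for every sufficiently large discount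
factor it yields each player `i` at least `w s i` from every initial state `s`. -/
def WAcceptableCorr (w : S → ι → ℝ) (τ : CorrStrategy ι S A) : Prop :=
  ∃ lam0 : ℝ, 0 ≤ lam0 ∧ lam0 < 1 ∧
    ∀ (i : ι) (s1 : S) (lam : ℝ), lam0 ≤ lam → lam < 1 → w s1 i ≤ G.disc lam i s1 τ

/-- A strategy profile is `w`-acceptable if for every sufficiently large discount
factor it yields each player `i` at least `w s i` from every initial state `s`. -/
def WAcceptable (w : S → ι → ℝ) (σ : Profile ι S A) : Prop :=
  G.WAcceptableCorr w (corrOf σ)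

/-- A strategy profile is min-max `ε`-acceptable if it is `w`-acceptable for
`w i s = v¹_i(s) - ε`. -/
def MinmaxAcceptable (ε : ℝ) (σ : Profile ι S A) : Prop :=
  G.WAcceptable (fun s i => G.v1 i s - ε) σ

/-- A correlated strategy is min-max `ε`-acceptable if it is `w`-acceptable for
`w i s = v¹_i(s) - ε`. -/
def MinmaxAcceptableCorr (ε : ℝ) (τ : CorrStrategy ι S A) : Prop :=
  G.WAcceptableCorr (fun s i => G.v1 i s - ε) τ

/-- `w` is a uniform equilibrium payoff. -/
def UnifEqPayoff (w : S → ι → ℝ) : Prop :=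
  ∀ ε : ℝ, 0 < ε → ∃ lam0 : ℝ, 0 ≤ lam0 ∧ lam0 < 1 ∧ ∃ σ : Profile ι S A,
    ∀ (s1 : S) (i : ι) (lam : ℝ), lam0 ≤ lam → lam < 1 →
      |G.discP lam i s1 σ - w s1 i| < ε ∧
      ∀ τi : Hist S A → ProbVec (A i),
        G.discP lam i s1 (replaceStrat σ i τi) - ε ≤ G.discP lam i s1 σ

end StochGame

/-- A finite automaton with stochastic transitions that implements a behavior strategy of
player `i`: its inputs are pairs (action profile, new state of the game) and its outputs are
mixed actions of player `i`. -/
structure Auto (ι S : Type*) (A : ι → Type*) [Fintype ι] [DecidableEq ι] [Fintype S]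
    [∀ j, Fintype (A j)] (i : ι) where
  Q : Type
  [fintypeQ : Fintype Q]
  f : Q → ProbVec (A i)
  g : Q → ActProf A × S → ProbVec Q
  init : Q

attribute [instance] Auto.fintypeQ

namespace Auto

variable {ι S : Type*} {A : ι → Type*} [Fintype ι] [DecidableEq ι] [Fintype S]
  [∀ j, Fintype (A j)] {i : ι}

/-- The (unnormalized) likelihood that, along the given finite history, the automaton's
private randomization is consistent with player `i`'s realized actions and the automaton
ends up in state `qq`. -/
def wt (M : Auto ι S A i) : List (S × ActProf A) → S → M.Q → ℝ
  | [], _, qq => if qq = M.init then 1 else 0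
  | p :: l, s, qq =>
      ∑ q' : M.Q, M.wt l p.1 q' * (M.f q').1 (p.2 i) * (M.g q' (p.2, s)).1 qq

/-- The automaton `M` implements the behavior strategy `σi` of player `i`: at every
finite history that is consistent with the automaton's behavior, `σi` plays the mixed
action obtained by averaging the automaton's output over its (conditional) state. -/
def Implements (M : Auto ι S A i) (σi : Hist S A → ProbVec (A i)) : Prop :=
  ∀ h : Hist S A, 0 < ∑ qq : M.Q, M.wt h.1 h.2 qq →
    ∀ b : A i, (σi h).1 b * ∑ qq : M.Q, M.wt h.1 h.2 qq
      = ∑ qq : M.Q, M.wt h.1 h.2 qq * (M.f qq).1 b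

end Auto

/-- Player `i`'s behavior strategy `σi` can be implemented by an automaton with at most
`n` states. -/
def ImplementableBy {ι S : Type*} {A : ι → Type*} [Fintype ι] [DecidableEq ι] [Fintype S]
    [∀ j, Fintype (A j)] (i : ι) (σi : Hist S A → ProbVec (A i)) (n : ℕ) : Prop :=
  ∃ M : Auto ι S A i, M.Implements σi ∧ Nat.card M.Q ≤ n

namespace StochGame

variable {ι S : Type*} {A : ι → Type*} [Fintype ι] [DecidableEq ι] [Fintype S]
  [∀ i, Fintype (A i)] [Nonempty S] [∀ i, Nonempty (A i)]

variable (G : StochGame ι S A)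

/-- The probability `q(D | s, a)` of moving into the set `D` from state `s` when the
action profile `a` is played. -/
def qD (s : S) (a : ActProf A) (D : Set S) : ℝ :=
  ∑ s' : S, if s' ∈ D then G.q s a s' else 0

/-- The probability of moving into the set `D` from state `s` when the mixed action
profile `x` is played. -/
def qXD (s : S) (x : ∀ i, ProbVec (A i)) (D : Set S) : ℝ :=
  ∑ a : ActProf A, (prodDist x).1 a * G.qD s a D

/-- The probability, from the initial state `s1` under the correlated strategy `τ`,
that the play reaches the set `D` (strictly) before leaving the set `C`:
`P(ν_D < ν_{Cᶜ})`. -/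
def reachInProb (τ : CorrStrategy ι S A) (s1 : S) (C D : Set S) : ℝ :=
  ∑' n : ℕ, ∑ f : Fin n → S × ActProf A, ∑ s : S,
    if (∀ k, (f k).1 ∈ C ∧ (f k).1 ∉ D) ∧ s ∈ C ∧ s ∈ D
    then G.hprob τ s1 (List.ofFn f) s else 0

/-- The probability, from the initial state `s1` under the correlated strategy `τ`,
that the play eventually leaves the set `C`: `P(ν_{Cᶜ} < ∞)`. -/
def leaveProb (τ : CorrStrategy ι S A) (s1 : S) (C : Set S) : ℝ :=
  ∑' n : ℕ, ∑ f : Fin n → S × ActProf A, ∑ s : S,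
    if (∀ k, (f k).1 ∈ C) ∧ s ∉ C then G.hprob τ s1 (List.ofFn f) s else 0

/-- The expectation, from the initial state `s1` under the correlated strategy `τ`, of
`φ(s^{ν_{Cᶜ}})`, where `ν_{Cᶜ}` is the first stage at which the play is outside `C`. -/
def exitVal (τ : CorrStrategy ι S A) (s1 : S) (C : Set S) (φ : S → ℝ) : ℝ :=
  ∑' n : ℕ, ∑ f : Fin n → S × ActProf A, ∑ s : S,
    if (∀ k, (f k).1 ∈ C) ∧ s ∉ C then G.hprob τ s1 (List.ofFn f) s * φ s else 0

/-- The payoff of the one-shot game `G(s)`: the expectation of tomorrow's uniform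
min-max value of player `i` when the action profile `a` is played at state `s`. -/
def ustar (i : ι) (s : S) (a : ActProf A) : ℝ := ∑ s' : S, G.q s a s' * G.v1 i s'

/-- The multilinear extension of the one-shot payoff `ustar` to mixed action profiles. -/
def ustarX (i : ι) (s : S) (x : ∀ i, ProbVec (A i)) : ℝ :=
  ∑ a : ActProf A, (prodDist x).1 a * G.ustar i s a

/-- The set `E(s)` of mixed-action Nash equilibria of the one-shot game `G(s)`. -/
def Eset (s : S) : Set (∀ i, ProbVec (A i)) :=
  {x | ∀ i : ι, ∀ d : ProbVec (A i),
    G.ustarX i s (Function.update x i d) ≤ G.ustarX i s x}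

/-- A set of states `D` is closed under `E` if no mixed action profile in `E(s)`, for
`s ∈ D`, can take the play out of `D`. -/
def ClosedUnderE (D : Set S) : Prop := ∀ s ∈ D, ∀ x ∈ G.Eset s, G.qXD s x D = 1

/-- State `s` leads in `C` to state `s'`: some strategy profile guarantees that the play
reaches `s'` before leaving `C`, with probability 1. -/
def LeadsIn (C : Set S) (s s' : S) : Prop :=
  ∃ σ : Profile ι S A, G.reachInProb (corrOf σ) s C {s'} = 1

/-- A (nonempty) set of states `C` is communicating under `E`. -/
def CommUnderE (C : Set S) : Prop :=
  C.Nonempty ∧ G.ClosedUnderE C ∧ (∀ s ∈ C, ∀ s' ∈ C, G.LeadsIn C s s') ∧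
    ∀ (i : ι), ∀ s ∈ C, ∀ s' ∈ C, G.v1 i s = G.v1 i s'

/-- A maximal communicating set under `E`. -/
def MaxCommUnderE (C : Set S) : Prop :=
  G.CommUnderE C ∧ ∀ C', G.CommUnderE C' → C ⊆ C' → C' = C

/-- The union of all maximal communicating sets under `E`. -/
def Cstar : Set S := {s | ∃ C : Set S, G.MaxCommUnderE C ∧ s ∈ C}

/-- The probability that the pair (state, action profile) at stage `n+1` equals `(s,a)`. -/
def saProb (τ : CorrStrategy ι S A) (s1 : S) (n : ℕ) (s : S) (a : ActProf A) : ℝ :=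
  ∑ f : Fin n → S × ActProf A,
    G.hprob τ s1 (List.ofFn f) s * (τ (List.ofFn f, s)).1 a

/-- The Cesàro averages whose limit (if it exists) is the state-action frequency. -/
def freqCesaro (τ : CorrStrategy ι S A) (s1 : S) (s : S) (a : ActProf A) : ℕ → ℝ :=
  fun N => (N : ℝ)⁻¹ * ∑ n ∈ Finset.range N, G.saProb τ s1 n s a

/-- The state-action frequency vector of `τ` at the initial state `s1` is well defined. -/
def FreqExists (τ : CorrStrategy ι S A) (s1 : S) : Prop :=
  ∀ (s : S) (a : ActProf A), ∃ r : ℝ, Tendsto (G.freqCesaro τ s1 s a) atTop (𝓝 r)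

/-- The state-action frequency vector of `τ` at the initial state `s1`. -/
def freq (τ : CorrStrategy ι S A) (s1 : S) : S → ActProf A → ℝ :=
  fun s a => limUnder atTop (G.freqCesaro τ s1 s a)

/-- The long-run average payoff of player `i` associated with a state-action frequency
vector `ρ`. -/
def freqPay (i : ι) (ρ : S → ActProf A → ℝ) : ℝ := ∑ s : S, ∑ a : ActProf A, ρ s a * G.u i s a

/-- A nonempty set of states `D` is closed under the stationary profile `x`. -/
def ClosedUnderStat (x : ∀ i, S → ProbVec (A i)) (D : Set S) : Prop :=
  D.Nonempty ∧ ∀ s ∈ D, G.qXD s (fun i => x i s) D = 1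

/-- `D` is an irreducible set with respect to the stationary profile `x`: it is closed
under `x` and contains no other closed set. -/
def IrredUnder (x : ∀ i, S → ProbVec (A i)) (D : Set S) : Prop :=
  G.ClosedUnderStat x D ∧ ∀ D' ⊂ D, ¬ G.ClosedUnderStat x D'

/-- The set `R(C)`: the convex hull of the state-action frequency vectors of stationary
strategy profiles started inside an irreducible set contained in `C`. -/
def RC (C : Set S) : Set (S → ActProf A → ℝ) :=
  convexHull ℝ {ρ | ∃ (x : ∀ i, S → ProbVec (A i)) (D : Set S) (s1 : S),
    G.IrredUnder x D ∧ D ⊆ C ∧ s1 ∈ D ∧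
    G.FreqExists (corrOf (statProf x)) s1 ∧ ρ = G.freq (corrOf (statProf x)) s1}

/-- `(s, a)` is an exit from the set `C`: `s ∈ C` and playing `a` at `s` leaves `C` with
positive probability. -/
def IsExit (C : Set S) (s : S) (a : ActProf A) : Prop := s ∈ C ∧ G.qD s a C < 1

/-- The probability that the first exit from `C` that is played is `(s, a)`:
`μ(s1, τ, C; s, a) = P(s^{ν*_C} = s, a^{ν*_C} = a)`. -/
def exitMu (τ : CorrStrategy ι S A) (s1 : S) (C : Set S) (s : S) (a : ActProf A) : ℝ :=
  ∑' n : ℕ, ∑ f : Fin n → S × ActProf A,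
    if ∀ k, ¬ G.IsExit C (f k).1 (f k).2
    then G.hprob τ s1 (List.ofFn f) s * (τ (List.ofFn f, s)).1 a else 0

/-- A strategy profile is an `ε`-perturbation of `E` if after every finite history the
mixed action profile that is played is `ε`-close to some element of `E(s)`, where `s`
is the current state. -/
def Perturb (ε : ℝ) (σ : Profile ι S A) : Prop :=
  ∀ h : Hist S A, ∃ x ∈ G.Eset h.2, ∀ (i : ι) (b : A i), |(σ i h).1 b - (x i).1 b| < ε

/-- The expected continuation min-max value of player `i` at state `s` when player `i`
plays action `ai` and the other players play their marginals under the correlated mixed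
action `α`. -/
def ustarDev (i : ι) (s : S) (ai : A i) (α : ProbVec (ActProf A)) : ℝ :=
  ∑ a : ActProf A, α.1 a * G.ustar i s (Function.update a i ai)

/-- A correlated strategy is `ε`-individually rational. -/
def IndivRationalCorr (ε : ℝ) (τ : CorrStrategy ι S A) : Prop :=
  ∀ (h : Hist S A) (i : ι) (ai : A i), ∃ L : ℝ,
    Tendsto (fun lam => G.disc lam i h.2 (contC τ h)) (𝓝[<] (1 : ℝ)) (𝓝 L) ∧
    G.ustarDev i h.2 ai (τ h) ≤ L + ε

/-- A strategy profile is `ε`-individually rational. -/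
def IndivRational (ε : ℝ) (σ : Profile ι S A) : Prop :=
  G.IndivRationalCorr ε (corrOf σ)

/-- A strategy profile is subgame-perfect min-max `ε`-acceptable. -/
def SubgamePerfectMinmaxAcceptable (ε : ℝ) (σ : Profile ι S A) : Prop :=
  ∀ (i : ι) (h : Hist S A), ∃ lam0 : ℝ, 0 ≤ lam0 ∧ lam0 < 1 ∧
    ∀ lam : ℝ, lam0 ≤ lam → lam < 1 →
      G.v1 i h.2 - ε ≤ G.disc lam i h.2 (contC (corrOf σ) h)

/-- The prefix of the history `(l, s)` having `m` past stages (`m < l.length`). -/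
def histPrefix (l : List (S × ActProf A)) (m : ℕ) (s : S) : Hist S A :=
  match l.drop (l.length - m - 1) with
  | [] => (l, s)
  | p :: rest => (rest, p.1)

/-- The expectation of `v¹_i(s^ν)`, where `ν` is the stopping time that stops at the
first history at which the stopping rule `r` holds, and in any case no later than after
`N ≥ 1` further stages. -/
def stopVal (τ : CorrStrategy ι S A) (s1 : S) (i : ι) (N : ℕ) (r : Hist S A → Prop) : ℝ :=
  ∑ k ∈ Finset.Icc 1 N, ∑ f : Fin k → S × ActProf A, ∑ s : S,
    if (r (List.ofFn f, s) ∨ k = N) ∧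
        (∀ m, 1 ≤ m → m < k → ¬ r (histPrefix (List.ofFn f) m s))
    then G.hprob τ s1 (List.ofFn f) s * G.v1 i s else 0

/-- The conditions (SV.1)-(SV.4) satisfied by the strategy profiles constructed by
Solan and Vieille (2002). -/
def SVConds (ε : ℝ) (σ : Profile ι S A) : Prop :=
  G.Perturb ε σ ∧
  (∀ h : Hist S A, G.FreqExists (contC (corrOf σ) h) h.2) ∧
  (∀ h : Hist S A, ∀ N : ℕ, 1 ≤ N → ∀ r : Hist S A → Prop, ∀ i : ι,
    G.v1 i h.2 - ε ≤ G.stopVal (contC (corrOf σ) h) h.2 i N r) ∧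
  (∀ (h : Hist S A) (i : ι),
    G.v1 i h.2 - ε ≤ G.freqPay i (G.freq (contC (corrOf σ) h) h.2))

/-- A communicating set `C` has type A with respect to the family `(σ̂^ε)`:
for some finite history, with probability bounded away from zero (as `ε → 0`)
the play never leaves `C`. -/
def TypeA (hatσ : ℝ → Profile ι S A) (C : Set S) : Prop :=
  ∃ h : Hist S A,
    0 < Filter.limsup (fun ε => 1 - G.leaveProb (corrOf (hatσ ε)) h.2 C) (𝓝[>] (0 : ℝ))

end StochGame

namespace SGX
set_option linter.unusedSectionVars false

open StochGame

/-- Indicator of a proposition. -/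
def ind (p : Prop) : ℝ := if p then 1 else 0

lemma ind_nonneg (p : Prop) : 0 ≤ ind p := by unfold ind; split <;> norm_num

lemma ind_le_one (p : Prop) : ind p ≤ 1 := by unfold ind; split <;> norm_num

lemma ind_true : ind True = 1 := if_pos trivial

lemma ind_of (p : Prop) (h : p) : ind p = 1 := if_pos h

lemma ind_of_not (p : Prop) (h : ¬ p) : ind p = 0 := if_neg h

lemma ind_and (p q : Prop) : ind (p ∧ q) = ind p * ind q := by
  by_cases hp : p <;> by_cases hq : q <;> simp [ind, hp, hq]

lemma ind_partition {S : Type*} (C D : Set S) (u : S) :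
    ind ((u ∈ C ∧ u ∈ D)) + ind ((u ∈ C ∧ u ∉ D)) + ind ((u ∉ C)) = 1 := by
  by_cases h1 : u ∈ C <;> by_cases h2 : u ∈ D <;> simp [ind, h1, h2]

variable {ι S : Type*} {A : ι → Type*} [Fintype ι] [DecidableEq ι] [Fintype S]
  [∀ i, Fintype (A i)] [Nonempty S] [∀ i, Nonempty (A i)]

/-- All states along the (reverse-chronological) record are alive: in `C`, not in `D`. -/
def alF (C D : Set S) {n : ℕ} (f : Fin n → S × ActProf A) : Prop :=
  ∀ k, (f k).1 ∈ C ∧ (f k).1 ∉ D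

def alL (C D : Set S) (l : List (S × ActProf A)) : Prop := ∀ p ∈ l, p.1 ∈ C ∧ p.1 ∉ D

lemma alF_cons (C D : Set S) {n : ℕ} (p : S × ActProf A) (g : Fin n → S × ActProf A) :
    alF C D (Fin.cons p g) ↔ ((p.1 ∈ C ∧ p.1 ∉ D) ∧ alF C D g) := by
  constructor
  · intro h
    exact ⟨h 0, fun k => by simpa using h k.succ⟩
  · intro h k
    rcases Fin.eq_zero_or_eq_succ k with hk | ⟨j, hj⟩
    · simpa [hk] using h.1
    · simpa [hj] using h.2 j

variable (G : StochGame ι S A)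

lemma hprob_nonneg (τ : CorrStrategy ι S A) (s1 : S) :
    ∀ (l : List (S × ActProf A)) (u : S), 0 ≤ G.hprob τ s1 l u := by
  intro l
  induction l with
  | nil => intro u; simp only [hprob]; split <;> norm_num
  | cons p l ih =>
    intro u
    simp only [hprob]
    have := (τ (l, p.1)).2.1 p.2
    have := G.q_nonneg p.1 p.2 u
    have := ih p.1
    positivity

lemma hprob_cons (τ : CorrStrategy ι S A) (s1 : S) (p : S × ActProf A)
    (l : List (S × ActProf A)) (u : S) :
    G.hprob τ s1 (p :: l) u
      = G.hprob τ s1 l p.1 * (τ (l, p.1)).1 p.2 * G.q p.1 p.2 u := rfl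

lemma hprob_nil (τ : CorrStrategy ι S A) (s1 u : S) :
    G.hprob τ s1 [] u = ind (u = s1) := rfl

/-- The mass at stage `n` of records that stayed alive throughout, with the current
state satisfying `P`. -/
def msum (τ : CorrStrategy ι S A) (s1 : S) (C D : Set S) (P : S → Prop) (n : ℕ) : ℝ :=
  ∑ f : Fin n → S × ActProf A, ∑ u : S,
    ind (alF C D f) * ind (P u) * G.hprob τ s1 (List.ofFn f) u

lemma reachInProb_eq (τ : CorrStrategy ι S A) (s1 : S) (C D : Set S) :
    G.reachInProb τ s1 C D = ∑' n, msum G τ s1 C D (fun u => u ∈ C ∧ u ∈ D) n := by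
  unfold StochGame.reachInProb msum alF ind
  refine tsum_congr fun n => Finset.sum_congr rfl fun f _ => Finset.sum_congr rfl fun u _ => ?_
  by_cases h1 : ∀ (k : Fin n), (f k).1 ∈ C ∧ (f k).1 ∉ D <;>
    by_cases h2 : u ∈ C ∧ u ∈ D
  · rw [if_pos ⟨h1, h2.1, h2.2⟩, if_pos h1, if_pos h2, one_mul, one_mul]
  · rw [if_neg (fun h => h2 ⟨h.2.1, h.2.2⟩), if_pos h1, if_neg h2, one_mul, zero_mul]
  · rw [if_neg (fun h => h1 h.1), if_neg h1, zero_mul, zero_mul]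
  · rw [if_neg (fun h => h1 h.1), if_neg h1, zero_mul, zero_mul]

lemma msum_nonneg (τ : CorrStrategy ι S A) (s1 : S) (C D : Set S) (P : S → Prop) (n : ℕ) :
    0 ≤ msum G τ s1 C D P n := by
  refine Finset.sum_nonneg fun f _ => Finset.sum_nonneg fun u _ => ?_
  have := ind_nonneg (alF C D f)
  have := ind_nonneg (P u)
  have := hprob_nonneg G τ s1 (List.ofFn f) u
  positivity

end SGX
namespace SGX
set_option linter.unusedSectionVars false
variable {ι S : Type*} {A : ι → Type*} [Fintype ι] [DecidableEq ι] [Fintype S]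
  [∀ i, Fintype (A i)] [Nonempty S] [∀ i, Nonempty (A i)]
open StochGame
variable (G : StochGame ι S A) (τ : CorrStrategy ι S A) (s1 : S) (C D : Set S)

lemma msum_partition (n : ℕ) :
    msum G τ s1 C D (fun _ => True) n
      = msum G τ s1 C D (fun u => u ∈ C ∧ u ∈ D) n
        + msum G τ s1 C D (fun u => u ∈ C ∧ u ∉ D) n
        + msum G τ s1 C D (fun u => u ∉ C) n := by
  unfold msum
  rw [← Finset.sum_add_distrib, ← Finset.sum_add_distrib]
  refine Finset.sum_congr rfl fun f _ => ?_
  rw [← Finset.sum_add_distrib, ← Finset.sum_add_distrib]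
  refine Finset.sum_congr rfl fun u _ => ?_
  beta_reduce
  rw [ind_true]
  linear_combination (-(ind (alF C D f) * G.hprob τ s1 (List.ofFn f) u)) * (ind_partition C D u)

lemma msum_zero (P : S → Prop) :
    msum G τ s1 C D P 0 = ind (P s1) := by
  unfold msum
  rw [Fintype.sum_unique]
  have hA : ind (alF C D (default : Fin 0 → S × ActProf A)) = 1 :=
    ind_of _ (fun k => k.elim0)
  have h1 : ∀ u : S, ind (alF C D (default : Fin 0 → S × ActProf A)) * ind (P u)
      * G.hprob τ s1 (List.ofFn (default : Fin 0 → S × ActProf A)) u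
      = if u = s1 then ind (P u) else 0 := by
    intro u
    rw [hA, one_mul, List.ofFn_zero, hprob_nil]
    by_cases hu : u = s1 <;> simp [ind, hu]
  rw [Finset.sum_congr rfl fun u _ => h1 u, Finset.sum_ite_eq' Finset.univ s1 (fun u => ind (P u))]
  simp

lemma Tsucc (n : ℕ) :
    msum G τ s1 C D (fun _ => True) (n + 1)
      = msum G τ s1 C D (fun u => u ∈ C ∧ u ∉ D) n := by
  unfold msum
  have step1 : (∑ f : Fin (n+1) → S × ActProf A, ∑ u : S,
        ind (alF C D f) * ind True * G.hprob τ s1 (List.ofFn f) u)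
      = ∑ pg : (S × ActProf A) × (Fin n → S × ActProf A), ∑ u : S,
          ind (alF C D (Fin.cons pg.1 pg.2 : Fin (n+1) → S × ActProf A)) * ind True
            * G.hprob τ s1 (List.ofFn (Fin.cons pg.1 pg.2 : Fin (n+1) → S × ActProf A)) u := by
    refine (Fintype.sum_equiv ((Fin.consEquiv (fun _ => S × ActProf A)).symm)
      (fun f : Fin (n+1) → S × ActProf A => ∑ u : S,
        ind (alF C D f) * ind True * G.hprob τ s1 (List.ofFn f) u)
      (fun pg : (S × ActProf A) × (Fin n → S × ActProf A) => ∑ u : S,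
        ind (alF C D (Fin.cons pg.1 pg.2 : Fin (n+1) → S × ActProf A)) * ind True
          * G.hprob τ s1 (List.ofFn (Fin.cons pg.1 pg.2 : Fin (n+1) → S × ActProf A)) u)
      fun f => ?_)
    beta_reduce
    have hf : (Fin.cons (((Fin.consEquiv (fun _ => S × ActProf A)).symm) f).1
        (((Fin.consEquiv (fun _ => S × ActProf A)).symm) f).2 : Fin (n+1) → S × ActProf A) = f := by
      funext k
      rcases Fin.eq_zero_or_eq_succ k with hk | ⟨j, hj⟩
      · subst hk; simp [Fin.consEquiv]
      · subst hj; simp [Fin.consEquiv, Fin.tail]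
    rw [hf]
  rw [step1, Fintype.sum_prod_type]
  have key : ∀ (p : S × ActProf A) (g : Fin n → S × ActProf A),
      (∑ u : S, ind (alF C D (Fin.cons p g : Fin (n+1) → S × ActProf A)) * ind True
        * G.hprob τ s1 (List.ofFn (Fin.cons p g : Fin (n+1) → S × ActProf A)) u)
      = (ind (alF C D g) * ind (p.1 ∈ C ∧ p.1 ∉ D) * G.hprob τ s1 (List.ofFn g) p.1)
          * (τ (List.ofFn g, p.1)).1 p.2 := by
    intro p g
    have hof : List.ofFn (Fin.cons p g : Fin (n+1) → S × ActProf A) = p :: List.ofFn g := by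
      rw [List.ofFn_succ]
      simp
    have hcond : ind (alF C D (Fin.cons p g : Fin (n+1) → S × ActProf A))
        = ind (p.1 ∈ C ∧ p.1 ∉ D) * ind (alF C D g) := by
      rw [show ind (alF C D (Fin.cons p g : Fin (n+1) → S × ActProf A))
          = ind ((p.1 ∈ C ∧ p.1 ∉ D) ∧ alF C D g) from by
            by_cases h : alF C D (Fin.cons p g : Fin (n+1) → S × ActProf A)
            · rw [ind_of _ h, ind_of _ ((alF_cons C D p g).mp h)]
            · rw [ind_of_not _ h, ind_of_not _ (fun hh => h ((alF_cons C D p g).mpr hh))],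
        ind_and]
    calc (∑ u : S, ind (alF C D (Fin.cons p g : Fin (n+1) → S × ActProf A)) * ind True
        * G.hprob τ s1 (List.ofFn (Fin.cons p g : Fin (n+1) → S × ActProf A)) u)
        = ∑ u : S, (ind (alF C D g) * ind (p.1 ∈ C ∧ p.1 ∉ D) * G.hprob τ s1 (List.ofFn g) p.1
            * (τ (List.ofFn g, p.1)).1 p.2) * G.q p.1 p.2 u := by
          refine Finset.sum_congr rfl fun u _ => ?_
          rw [hof, hprob_cons, hcond, ind_true]
          ring
      _ = _ := by rw [← Finset.mul_sum, G.q_sum, mul_one]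
  rw [Finset.sum_congr rfl fun p _ => Finset.sum_congr rfl fun g _ => key p g]
  rw [Fintype.sum_prod_type]
  have key2 : ∀ t : S, (∑ a : ActProf A, ∑ g : Fin n → S × ActProf A,
      (ind (alF C D g) * ind (t ∈ C ∧ t ∉ D) * G.hprob τ s1 (List.ofFn g) t)
        * (τ (List.ofFn g, t)).1 a)
      = ∑ g : Fin n → S × ActProf A,
          ind (alF C D g) * ind (t ∈ C ∧ t ∉ D) * G.hprob τ s1 (List.ofFn g) t := by
    intro t
    rw [Finset.sum_comm]
    refine Finset.sum_congr rfl fun g _ => ?_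
    rw [← Finset.mul_sum, (τ (List.ofFn g, t)).2.2, mul_one]
  rw [Finset.sum_congr rfl fun t _ => key2 t, Finset.sum_comm]

lemma cumul (n : ℕ) :
    (∑ k ∈ Finset.range (n + 1),
        (msum G τ s1 C D (fun u => u ∈ C ∧ u ∈ D) k + msum G τ s1 C D (fun u => u ∉ C) k))
      + msum G τ s1 C D (fun u => u ∈ C ∧ u ∉ D) n = 1 := by
  induction n with
  | zero =>
    have h := msum_partition G τ s1 C D 0
    have hT := msum_zero G τ s1 C D (fun _ => True)
    rw [ind_true] at hT
    rw [Finset.sum_range_one]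
    linarith
  | succ n ih =>
    have hP := msum_partition G τ s1 C D (n + 1)
    have hT := Tsucc G τ s1 C D n
    rw [Finset.sum_range_succ]
    linarith

lemma partialR_le (n : ℕ) :
    ∑ k ∈ Finset.range n, msum G τ s1 C D (fun u => u ∈ C ∧ u ∈ D) k ≤ 1 := by
  have h := cumul G τ s1 C D n
  have h1 : ∑ k ∈ Finset.range n, msum G τ s1 C D (fun u => u ∈ C ∧ u ∈ D) k
      ≤ ∑ k ∈ Finset.range (n+1),
          (msum G τ s1 C D (fun u => u ∈ C ∧ u ∈ D) k + msum G τ s1 C D (fun u => u ∉ C) k) := by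
    calc ∑ k ∈ Finset.range n, msum G τ s1 C D (fun u => u ∈ C ∧ u ∈ D) k
        ≤ ∑ k ∈ Finset.range n,
            (msum G τ s1 C D (fun u => u ∈ C ∧ u ∈ D) k + msum G τ s1 C D (fun u => u ∉ C) k) :=
          Finset.sum_le_sum fun k _ => le_add_of_nonneg_right (msum_nonneg G τ s1 C D _ k)
      _ ≤ _ := by
          rw [Finset.sum_range_succ]
          exact le_add_of_nonneg_right (add_nonneg (msum_nonneg G τ s1 C D _ _)
            (msum_nonneg G τ s1 C D _ _))
  have h2 := msum_nonneg G τ s1 C D (fun u => u ∈ C ∧ u ∉ D) n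
  linarith

lemma R_summable : Summable (msum G τ s1 C D (fun u => u ∈ C ∧ u ∈ D)) :=
  summable_of_sum_range_le (fun n => msum_nonneg G τ s1 C D _ n) (partialR_le G τ s1 C D)

lemma tsumR_le_one : ∑' n, msum G τ s1 C D (fun u => u ∈ C ∧ u ∈ D) n ≤ 1 :=
  Real.tsum_le_of_sum_range_le (fun n => msum_nonneg G τ s1 C D _ n) (partialR_le G τ s1 C D)

end SGX
namespace SGX
set_option linter.unusedSectionVars false
variable {ι S : Type*} {A : ι → Type*} [Fintype ι] [DecidableEq ι] [Fintype S]
  [∀ i, Fintype (A i)] [Nonempty S] [∀ i, Nonempty (A i)]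
open StochGame Filter Topology
variable (G : StochGame ι S A) (τ : CorrStrategy ι S A) (s1 : S) (C D : Set S)

lemma hprob_append (l' l : List (S × ActProf A)) (u : S) :
    G.hprob τ s1 (l' ++ l) u
      = ∑ t : S, G.hprob τ s1 l t * G.hprob (contC τ (l, t)) t l' u := by
  induction l' generalizing u with
  | nil =>
    simp only [List.nil_append]
    have h1 : ∀ t : S, G.hprob τ s1 l t * G.hprob (contC τ (l, t)) t [] u
        = if t = u then G.hprob τ s1 l t else 0 := by
      intro t
      rw [hprob_nil]
      by_cases h : u = t
      · subst h; rw [ind_of _ rfl, mul_one, if_pos rfl]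
      · rw [ind_of_not _ h, mul_zero, if_neg (fun hh => h hh.symm)]
    rw [Finset.sum_congr rfl fun t _ => h1 t, Finset.sum_ite_eq' Finset.univ u]
    simp
  | cons p l'' ih =>
    rw [List.cons_append, hprob_cons, ih p.1, Finset.sum_mul, Finset.sum_mul]
    refine Finset.sum_congr rfl fun t _ => ?_
    have hc : G.hprob (contC τ (l, t)) t (p :: l'') u
        = G.hprob (contC τ (l, t)) t l'' p.1 * (τ (l'' ++ l, p.1)).1 p.2 * G.q p.1 p.2 u := rfl
    rw [hc]; ring

lemma M_succ_le (n : ℕ) :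
    msum G τ s1 C D (fun u => u ∈ C ∧ u ∉ D) (n + 1)
      ≤ msum G τ s1 C D (fun u => u ∈ C ∧ u ∉ D) n := by
  have h := msum_partition G τ s1 C D (n + 1)
  have hT := Tsucc G τ s1 C D n
  have h1 := msum_nonneg G τ s1 C D (fun u => u ∈ C ∧ u ∈ D) (n + 1)
  have h2 := msum_nonneg G τ s1 C D (fun u => u ∉ C) (n + 1)
  linarith

lemma L_succ_le (n : ℕ) :
    msum G τ s1 C D (fun u => u ∉ C) (n + 1)
      ≤ msum G τ s1 C D (fun u => u ∈ C ∧ u ∉ D) n := by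
  have h := msum_partition G τ s1 C D (n + 1)
  have hT := Tsucc G τ s1 C D n
  have h1 := msum_nonneg G τ s1 C D (fun u => u ∈ C ∧ u ∈ D) (n + 1)
  have h2 := msum_nonneg G τ s1 C D (fun u => u ∈ C ∧ u ∉ D) (n + 1)
  linarith

lemma tsum_R_eq_one
    (hL : ∀ k, msum G τ s1 C D (fun u => u ∉ C) k = 0)
    (hM : Tendsto (fun n => msum G τ s1 C D (fun u => u ∈ C ∧ u ∉ D) n) atTop (𝓝 0)) :
    ∑' n, msum G τ s1 C D (fun u => u ∈ C ∧ u ∈ D) n = 1 := by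
  have hpart : ∀ n, ∑ k ∈ Finset.range (n + 1), msum G τ s1 C D (fun u => u ∈ C ∧ u ∈ D) k
      = 1 - msum G τ s1 C D (fun u => u ∈ C ∧ u ∉ D) n := by
    intro n
    have h := cumul G τ s1 C D n
    have h2 : ∑ k ∈ Finset.range (n + 1),
        (msum G τ s1 C D (fun u => u ∈ C ∧ u ∈ D) k + msum G τ s1 C D (fun u => u ∉ C) k)
        = ∑ k ∈ Finset.range (n + 1), msum G τ s1 C D (fun u => u ∈ C ∧ u ∈ D) k := by
      refine Finset.sum_congr rfl fun k _ => by rw [hL k, add_zero]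
    rw [h2] at h
    linarith
  have hsum := R_summable G τ s1 C D
  have h1 : Tendsto (fun n => ∑ k ∈ Finset.range (n + 1),
      msum G τ s1 C D (fun u => u ∈ C ∧ u ∈ D) k) atTop
      (𝓝 (∑' n, msum G τ s1 C D (fun u => u ∈ C ∧ u ∈ D) n)) :=
    hsum.hasSum.tendsto_sum_nat.comp (tendsto_add_atTop_nat 1)
  have h2 : Tendsto (fun n => 1 - msum G τ s1 C D (fun u => u ∈ C ∧ u ∉ D) n) atTop
      (𝓝 (1 : ℝ)) := by
    have h3 : Tendsto (fun _ : ℕ => (1:ℝ)) atTop (𝓝 (1:ℝ)) := tendsto_const_nhds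
    simpa using h3.sub hM
  exact tendsto_nhds_unique (h1.congr hpart) h2

lemma M_eq_zero_of_start (hD : ¬ (s1 ∈ C ∧ s1 ∉ D)) (n : ℕ) :
    msum G τ s1 C D (fun u => u ∈ C ∧ u ∉ D) n = 0 := by
  induction n with
  | zero => rw [msum_zero]; exact ind_of_not _ hD
  | succ n ih =>
    have h1 := M_succ_le G τ s1 C D n
    have h2 := msum_nonneg G τ s1 C D (fun u => u ∈ C ∧ u ∉ D) (n + 1)
    linarith

lemma reach_one_of_start_target (hC : s1 ∈ C) (hD : s1 ∈ D) :
    ∑' n, msum G τ s1 C D (fun u => u ∈ C ∧ u ∈ D) n = 1 := by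
  have hM0 : ∀ n, msum G τ s1 C D (fun u => u ∈ C ∧ u ∉ D) n = 0 :=
    M_eq_zero_of_start G τ s1 C D (fun h => h.2 hD)
  refine tsum_R_eq_one G τ s1 C D ?_ ?_
  · intro k
    cases k with
    | zero => rw [msum_zero]; exact ind_of_not _ (fun h => h hC)
    | succ n =>
      have h1 := L_succ_le G τ s1 C D n
      have h2 := msum_nonneg G τ s1 C D (fun u => u ∉ C) (n + 1)
      rw [hM0 n] at h1
      linarith
  · exact (tendsto_congr fun n => (hM0 n).symm).mp tendsto_const_nhds

end SGX
namespace SGX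
set_option linter.unusedSectionVars false
variable {ι S : Type*} {A : ι → Type*} [Fintype ι] [DecidableEq ι] [Fintype S]
  [∀ i, Fintype (A i)] [Nonempty S] [∀ i, Nonempty (A i)]
open StochGame Filter Topology

lemma ind_prop_of_ne_zero {p : Prop} (h : ind p ≠ 0) : p := by
  by_contra hp; exact h (ind_of_not _ hp)

/-- A pure-stationary "good structure": a set `W ⊆ C` of states together with a pure
stationary action choice and a rank function witnessing that from every state of `W`
outside `D`, play stays in `W` and has a positive-probability transition decreasing
the rank. -/
structure Pack (G : StochGame ι S A) (C D : Set S) where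
  W : Set S
  act : S → ActProf A
  rk : S → ℕ
  subC : W ⊆ C
  closed : ∀ t ∈ W, t ∉ D → ∀ v, 0 < G.q t (act t) v → v ∈ W
  rank : ∀ t ∈ W, t ∉ D → ∃ v, 0 < G.q t (act t) v ∧ v ∈ W ∧ rk v < rk t

/-- The pure stationary profile induced by a choice of action profile at every state. -/
def pstrat (act : S → ActProf A) : Profile ι S A := fun i h => pureDist (act h.2 i)

lemma pstrat_pure (act : S → ActProf A) : IsPureStationary (pstrat (ι := ι) (A := A) act) :=
  ⟨fun i t => act t i, rfl⟩

lemma corr_pstrat (act : S → ActProf A) (h : Hist S A) (a : ActProf A) :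
    (corrOf (pstrat act) h).1 a = ind (a = act h.2) := by
  have h1 : (corrOf (pstrat act) h).1 a = ∏ i, (pureDist (act h.2 i)).1 (a i) := rfl
  have h2 : ∀ i, (pureDist (act h.2 i)).1 (a i) = if a i = act h.2 i then 1 else 0 := fun i => rfl
  rw [h1, Finset.prod_congr rfl fun i _ => h2 i, Fintype.prod_boole]
  unfold ind
  by_cases hh : a = act h.2
  · rw [if_pos hh, if_pos (fun i => by rw [hh])]
  · rw [if_neg (fun hc : ∀ i, a i = act h.2 i => hh (funext hc)), if_neg hh]

variable (G : StochGame ι S A)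

lemma q_le_one (t : S) (a : ActProf A) (v : S) : G.q t a v ≤ 1 := by
  have h := G.q_sum t a
  have h2 : G.q t a v ≤ ∑ v' : S, G.q t a v' :=
    Finset.single_le_sum (fun v' _ => G.q_nonneg t a v') (Finset.mem_univ v)
  linarith

/-- Minimum positive one-step transition probability under the pure stationary profile. -/
def dmin (act : S → ActProf A) : ℝ :=
  if h : (Finset.univ.filter (fun p : S × S => 0 < G.q p.1 (act p.1) p.2)).Nonempty
  then (Finset.univ.filter (fun p : S × S => 0 < G.q p.1 (act p.1) p.2)).inf' h
      (fun p => G.q p.1 (act p.1) p.2)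
  else 1

lemma dmin_pos (act : S → ActProf A) : 0 < dmin G act := by
  unfold dmin
  split
  · rename_i h
    obtain ⟨p, hp, hep⟩ := Finset.exists_mem_eq_inf' h (fun p : S × S => G.q p.1 (act p.1) p.2)
    rw [hep]
    exact (Finset.mem_filter.mp hp).2
  · norm_num

lemma dmin_le_one (act : S → ActProf A) : dmin G act ≤ 1 := by
  unfold dmin
  split
  · rename_i h
    obtain ⟨p, hp, hep⟩ := Finset.exists_mem_eq_inf' h (fun p : S × S => G.q p.1 (act p.1) p.2)
    rw [hep]
    exact q_le_one G p.1 (act p.1) p.2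
  · norm_num

lemma dmin_le (act : S → ActProf A) (t v : S) (h : 0 < G.q t (act t) v) :
    dmin G act ≤ G.q t (act t) v := by
  have hmem : (t, v) ∈ Finset.univ.filter (fun p : S × S => 0 < G.q p.1 (act p.1) p.2) :=
    Finset.mem_filter.mpr ⟨Finset.mem_univ _, h⟩
  unfold dmin
  rw [dif_pos ⟨(t, v), hmem⟩]
  exact Finset.inf'_le _ hmem

/-- Mass at stage `n` on records that stayed alive, as a function of the current state. -/
def AStat (τ : CorrStrategy ι S A) (s1 : S) (C D : Set S) (n : ℕ) (u : S) : ℝ :=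
  ∑ f : Fin n → S × ActProf A, ind (alF C D f) * G.hprob τ s1 (List.ofFn f) u

lemma AStat_nonneg (τ : CorrStrategy ι S A) (s1 : S) (C D : Set S) (n : ℕ) (u : S) :
    0 ≤ AStat G τ s1 C D n u :=
  Finset.sum_nonneg fun f _ =>
    mul_nonneg (ind_nonneg _) (hprob_nonneg G τ s1 _ u)

lemma msum_eq_AStat (τ : CorrStrategy ι S A) (s1 : S) (C D : Set S) (P : S → Prop) (n : ℕ) :
    msum G τ s1 C D P n = ∑ u : S, ind (P u) * AStat G τ s1 C D n u := by
  unfold msum AStat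
  rw [Finset.sum_comm]
  refine Finset.sum_congr rfl fun u _ => ?_
  rw [Finset.mul_sum]
  exact Finset.sum_congr rfl fun f _ => by ring

lemma AStat_zero (τ : CorrStrategy ι S A) (s1 : S) (C D : Set S) (u : S) :
    AStat G τ s1 C D 0 u = ind (u = s1) := by
  unfold AStat
  rw [Fintype.sum_unique]
  have hA : alF C D (default : Fin 0 → S × ActProf A) := fun k => k.elim0
  rw [ind_of _ hA, one_mul, List.ofFn_zero, hprob_nil]

/-- Alive mass vector. -/
def av (τ : CorrStrategy ι S A) (s1 : S) (C D : Set S) (n : ℕ) (t : S) : ℝ :=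
  ind (t ∈ C ∧ t ∉ D) * AStat G τ s1 C D n t

lemma av_nonneg (τ : CorrStrategy ι S A) (s1 : S) (C D : Set S) (n : ℕ) (t : S) :
    0 ≤ av G τ s1 C D n t :=
  mul_nonneg (ind_nonneg _) (AStat_nonneg G τ s1 C D n t)

lemma M_eq_av (τ : CorrStrategy ι S A) (s1 : S) (C D : Set S) (n : ℕ) :
    msum G τ s1 C D (fun u => u ∈ C ∧ u ∉ D) n = ∑ t : S, av G τ s1 C D n t :=
  msum_eq_AStat G τ s1 C D _ n

/-- Key recursion for the pure stationary profile. -/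
lemma AStat_succ (act : S → ActProf A) (s1 : S) (C D : Set S) (n : ℕ) (u : S) :
    AStat G (corrOf (pstrat act)) s1 C D (n + 1) u
      = ∑ t : S, av G (corrOf (pstrat act)) s1 C D n t * G.q t (act t) u := by
  set τ := corrOf (pstrat (ι := ι) (A := A) act) with hτ
  unfold AStat
  have step1 : (∑ f : Fin (n+1) → S × ActProf A,
        ind (alF C D f) * G.hprob τ s1 (List.ofFn f) u)
      = ∑ pg : (S × ActProf A) × (Fin n → S × ActProf A),
          ind (alF C D (Fin.cons pg.1 pg.2 : Fin (n+1) → S × ActProf A))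
            * G.hprob τ s1 (List.ofFn (Fin.cons pg.1 pg.2 : Fin (n+1) → S × ActProf A)) u := by
    refine Fintype.sum_equiv ((Fin.consEquiv (fun _ => S × ActProf A)).symm)
      (fun f : Fin (n+1) → S × ActProf A =>
        ind (alF C D f) * G.hprob τ s1 (List.ofFn f) u)
      (fun pg : (S × ActProf A) × (Fin n → S × ActProf A) =>
        ind (alF C D (Fin.cons pg.1 pg.2 : Fin (n+1) → S × ActProf A))
          * G.hprob τ s1 (List.ofFn (Fin.cons pg.1 pg.2 : Fin (n+1) → S × ActProf A)) u)
      fun f => ?_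
    beta_reduce
    have hf : (Fin.cons (((Fin.consEquiv (fun _ => S × ActProf A)).symm) f).1
        (((Fin.consEquiv (fun _ => S × ActProf A)).symm) f).2 : Fin (n+1) → S × ActProf A) = f := by
      funext k
      rcases Fin.eq_zero_or_eq_succ k with hk | ⟨j, hj⟩
      · subst hk; simp [Fin.consEquiv]
      · subst hj; simp [Fin.consEquiv, Fin.tail]
    rw [hf]
  rw [step1, Fintype.sum_prod_type]
  have key : ∀ (p : S × ActProf A) (g : Fin n → S × ActProf A),
      ind (alF C D (Fin.cons p g : Fin (n+1) → S × ActProf A))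
        * G.hprob τ s1 (List.ofFn (Fin.cons p g : Fin (n+1) → S × ActProf A)) u
      = (ind (p.1 ∈ C ∧ p.1 ∉ D) * (ind (alF C D g) * G.hprob τ s1 (List.ofFn g) p.1))
          * (ind (p.2 = act p.1) * G.q p.1 p.2 u) := by
    intro p g
    have hof : List.ofFn (Fin.cons p g : Fin (n+1) → S × ActProf A) = p :: List.ofFn g := by
      rw [List.ofFn_succ]; simp
    have hcond : ind (alF C D (Fin.cons p g : Fin (n+1) → S × ActProf A))
        = ind (p.1 ∈ C ∧ p.1 ∉ D) * ind (alF C D g) := by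
      rw [show ind (alF C D (Fin.cons p g : Fin (n+1) → S × ActProf A))
          = ind ((p.1 ∈ C ∧ p.1 ∉ D) ∧ alF C D g) from by
            by_cases h : alF C D (Fin.cons p g : Fin (n+1) → S × ActProf A)
            · rw [ind_of _ h, ind_of _ ((alF_cons C D p g).mp h)]
            · rw [ind_of_not _ h, ind_of_not _ (fun hh => h ((alF_cons C D p g).mpr hh))],
        ind_and]
    rw [hof, hprob_cons, hcond, corr_pstrat]
    ring
  show (∑ p : S × ActProf A, ∑ g : Fin n → S × ActProf A,
      ind (alF C D (Fin.cons p g : Fin (n+1) → S × ActProf A))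
        * G.hprob τ s1 (List.ofFn (Fin.cons p g : Fin (n+1) → S × ActProf A)) u)
      = ∑ t : S, av G τ s1 C D n t * G.q t (act t) u
  rw [Finset.sum_congr rfl fun p _ => Finset.sum_congr rfl fun g _ => key p g]
  rw [Fintype.sum_prod_type]
  show (∑ t : S, ∑ a : ActProf A, ∑ g : Fin n → S × ActProf A,
      (ind (t ∈ C ∧ t ∉ D) * (ind (alF C D g) * G.hprob τ s1 (List.ofFn g) t))
        * (ind (a = act t) * G.q t a u))
      = ∑ t : S, av G τ s1 C D n t * G.q t (act t) u
  refine Finset.sum_congr rfl fun t _ => ?_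
  have hsum_a : ∀ t : S, (∑ a : ActProf A, ∑ g : Fin n → S × ActProf A,
      (ind (t ∈ C ∧ t ∉ D) * (ind (alF C D g) * G.hprob τ s1 (List.ofFn g) t))
        * (ind (a = act t) * G.q t a u))
      = av G τ s1 C D n t * G.q t (act t) u := by
    intro t
    have h1 : ∀ a : ActProf A, (∑ g : Fin n → S × ActProf A,
        (ind (t ∈ C ∧ t ∉ D) * (ind (alF C D g) * G.hprob τ s1 (List.ofFn g) t))
          * (ind (a = act t) * G.q t a u))
        = if a = act t then av G τ s1 C D n t * G.q t a u else 0 := by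
      intro a
      by_cases ha : a = act t
      · rw [if_pos ha, ind_of _ ha, one_mul]
        unfold av AStat
        rw [Finset.mul_sum, Finset.sum_mul]
        all_goals exact Finset.sum_congr rfl fun g _ => by ring
      · rw [if_neg ha, ind_of_not _ ha]
        exact Finset.sum_eq_zero fun g _ => by ring
    rw [Finset.sum_congr rfl fun a _ => h1 a, Finset.sum_ite_eq' Finset.univ (act t)]
    simp
  exact hsum_a t

end SGX
namespace SGX
set_option linter.unusedSectionVars false
variable {ι S : Type*} {A : ι → Type*} [Fintype ι] [DecidableEq ι] [Fintype S]
  [∀ i, Fintype (A i)] [Nonempty S] [∀ i, Nonempty (A i)]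
open StochGame Filter Topology

variable (G : StochGame ι S A)

/-- Sub-stochastic one-step kernel, killed outside the alive region. -/
def Qm (act : S → ActProf A) (C D : Set S) (t u : S) : ℝ :=
  ind (u ∈ C ∧ u ∉ D) * G.q t (act t) u

lemma Qm_nonneg (act : S → ActProf A) (C D : Set S) (t u : S) : 0 ≤ Qm G act C D t u :=
  mul_nonneg (ind_nonneg _) (G.q_nonneg _ _ _)

lemma Qm_le_q (act : S → ActProf A) (C D : Set S) (t u : S) :
    Qm G act C D t u ≤ G.q t (act t) u := by
  unfold Qm
  nlinarith [ind_nonneg (u ∈ C ∧ u ∉ D), ind_le_one (u ∈ C ∧ u ∉ D), G.q_nonneg t (act t) u]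

lemma Qm_rowsum_le (act : S → ActProf A) (C D : Set S) (t : S) :
    ∑ u : S, Qm G act C D t u ≤ 1 := by
  calc ∑ u : S, Qm G act C D t u ≤ ∑ u : S, G.q t (act t) u :=
        Finset.sum_le_sum fun u _ => Qm_le_q G act C D t u
    _ = 1 := G.q_sum t (act t)

/-- Survival mass after `k` steps of the killed chain. -/
def rs (act : S → ActProf A) (C D : Set S) : ℕ → S → ℝ
  | 0 => fun _ => 1
  | k + 1 => fun t => ∑ u : S, Qm G act C D t u * rs act C D k u

lemma rs_nonneg (act : S → ActProf A) (C D : Set S) : ∀ k t, 0 ≤ rs G act C D k t := by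
  intro k
  induction k with
  | zero => intro t; exact zero_le_one
  | succ k ih =>
    intro t
    exact Finset.sum_nonneg fun u _ => mul_nonneg (Qm_nonneg G act C D t u) (ih u)

lemma rs_le_one (act : S → ActProf A) (C D : Set S) : ∀ k t, rs G act C D k t ≤ 1 := by
  intro k
  induction k with
  | zero => intro t; exact le_refl 1
  | succ k ih =>
    intro t
    calc ∑ u : S, Qm G act C D t u * rs G act C D k u
        ≤ ∑ u : S, Qm G act C D t u :=
          Finset.sum_le_sum fun u _ => by
            nlinarith [Qm_nonneg G act C D t u, ih u, rs_nonneg G act C D k u]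
      _ ≤ 1 := Qm_rowsum_le G act C D t

lemma av_succ (act : S → ActProf A) (s1 : S) (C D : Set S) (n : ℕ) (u : S) :
    av G (corrOf (pstrat act)) s1 C D (n + 1) u
      = ∑ t : S, av G (corrOf (pstrat act)) s1 C D n t * Qm G act C D t u := by
  unfold av
  rw [AStat_succ, Finset.mul_sum]
  refine Finset.sum_congr rfl fun t _ => ?_
  unfold Qm av
  ring

lemma M_shift (act : S → ActProf A) (s1 : S) (C D : Set S) :
    ∀ (k n : ℕ), msum G (corrOf (pstrat act)) s1 C D (fun u => u ∈ C ∧ u ∉ D) (n + k)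
      = ∑ t : S, av G (corrOf (pstrat act)) s1 C D n t * rs G act C D k t := by
  intro k
  induction k with
  | zero =>
    intro n
    rw [Nat.add_zero, M_eq_av]
    exact Finset.sum_congr rfl fun t _ => by rw [show rs G act C D 0 t = 1 from rfl, mul_one]
  | succ k ih =>
    intro n
    have h1 : n + (k + 1) = (n + 1) + k := by omega
    rw [h1, ih (n + 1)]
    have h2 : ∀ t : S, av G (corrOf (pstrat act)) s1 C D (n+1) t * rs G act C D k t
        = ∑ w : S, (av G (corrOf (pstrat act)) s1 C D n w * Qm G act C D w t)
            * rs G act C D k t := by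
      intro t
      rw [av_succ, Finset.sum_mul]
    rw [Finset.sum_congr rfl fun t _ => h2 t, Finset.sum_comm]
    refine Finset.sum_congr rfl fun w _ => ?_
    rw [show rs G act C D (k+1) w = ∑ u : S, Qm G act C D w u * rs G act C D k u from rfl,
      Finset.mul_sum]
    exact Finset.sum_congr rfl fun t _ => by ring

section PackFacts

variable {G} (C D : Set S) (P : Pack G C D) (s : S)

lemma av_mem_W (hsW : s ∈ P.W) :
    ∀ n t, av G (corrOf (pstrat P.act)) s C D n t ≠ 0 → t ∈ P.W := by
  intro n
  induction n with
  | zero =>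
    intro t ht
    unfold av at ht
    rw [AStat_zero] at ht
    have h2 : ind (t = s) ≠ 0 := fun h => ht (by rw [h, mul_zero])
    rw [ind_prop_of_ne_zero h2]
    exact hsW
  | succ n ih =>
    intro t ht
    rw [av_succ] at ht
    obtain ⟨w, _, hw⟩ := Finset.exists_ne_zero_of_sum_ne_zero ht
    have havw : av G (corrOf (pstrat P.act)) s C D n w ≠ 0 := fun h => hw (by rw [h, zero_mul])
    have hQ : Qm G P.act C D w t ≠ 0 := fun h => hw (by rw [h, mul_zero])
    have hwW := ih w havw
    have hwAl : w ∈ C ∧ w ∉ D := by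
      unfold av at havw
      exact ind_prop_of_ne_zero (fun h => havw (by rw [h, zero_mul]))
    have hq : 0 < G.q w (P.act w) t := by
      unfold Qm at hQ
      have h1 : G.q w (P.act w) t ≠ 0 := fun h => hQ (by rw [h, mul_zero])
      exact lt_of_le_of_ne (G.q_nonneg _ _ _) (Ne.symm h1)
    exact P.closed w hwW hwAl.2 t hq

lemma pack_L_zero (hsW : s ∈ P.W) :
    ∀ k, msum G (corrOf (pstrat P.act)) s C D (fun u => u ∉ C) k = 0 := by
  intro k
  cases k with
  | zero =>
    rw [msum_zero]
    exact ind_of_not _ (fun h => h (P.subC hsW))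
  | succ n =>
    rw [msum_eq_AStat]
    refine Finset.sum_eq_zero fun u _ => ?_
    by_cases hu : u ∉ C
    · rw [AStat_succ]
      have h1 : ∀ t : S, av G (corrOf (pstrat P.act)) s C D n t * G.q t (P.act t) u = 0 := by
        intro t
        by_cases hav : av G (corrOf (pstrat P.act)) s C D n t = 0
        · rw [hav, zero_mul]
        · have htW := av_mem_W C D P s hsW n t hav
          have htAl : t ∈ C ∧ t ∉ D := by
            unfold av at hav
            exact ind_prop_of_ne_zero (fun h => hav (by rw [h, zero_mul]))
          have hq : G.q t (P.act t) u = 0 := by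
            by_contra hq
            have hq' : 0 < G.q t (P.act t) u :=
              lt_of_le_of_ne (G.q_nonneg _ _ _) (Ne.symm hq)
            exact hu (P.subC (P.closed t htW htAl.2 u hq'))
          rw [hq, mul_zero]
      rw [Finset.sum_congr rfl fun t _ => h1 t]
      simp
    · rw [ind_of_not _ (fun h => hu h), zero_mul]

lemma rs_rank_bound :
    ∀ (r : ℕ), ∀ t ∈ P.W, t ∉ D → P.rk t ≤ r →
      ∀ k, P.rk t ≤ k → rs G P.act C D k t ≤ 1 - dmin G P.act ^ P.rk t := by
  intro r
  induction r with
  | zero =>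
    intro t htW htD hr
    obtain ⟨v, hv, hvW, hlt⟩ := P.rank t htW htD
    omega
  | succ r ih =>
    intro t htW htD hr k hk
    obtain ⟨v, hqv, hvW, hlt⟩ := P.rank t htW htD
    have hrk1 : 1 ≤ P.rk t := by omega
    obtain ⟨k', rfl⟩ : ∃ k', k = k' + 1 := ⟨k - 1, by omega⟩
    have hδpos := dmin_pos G P.act
    have hδle := dmin_le_one G P.act
    have hδv := dmin_le G P.act t v hqv
    rw [show rs G P.act C D (k'+1) t = ∑ u : S, Qm G P.act C D t u * rs G P.act C D k' u
      from rfl]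
    by_cases hvD : v ∈ D
    · -- the designated transition leaves the alive region immediately
      have hQv : Qm G P.act C D t v = 0 := by
        unfold Qm
        rw [ind_of_not _ (fun h => h.2 hvD), zero_mul]
      have hbound : ∑ u : S, Qm G P.act C D t u * rs G P.act C D k' u
          ≤ ∑ u : S, (G.q t (P.act t) u - if u = v then G.q t (P.act t) v else 0) := by
        refine Finset.sum_le_sum fun u _ => ?_
        by_cases hu : u = v
        · subst hu
          rw [if_pos rfl, hQv, zero_mul]
          linarith
        · rw [if_neg hu, sub_zero]
          have h1 := Qm_le_q G P.act C D t u
          have h2 := Qm_nonneg G P.act C D t u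
          have h3 := rs_le_one G P.act C D k' u
          have h4 := rs_nonneg G P.act C D k' u
          nlinarith
      have hsplit : ∑ u : S, (G.q t (P.act t) u - if u = v then G.q t (P.act t) v else 0)
          = 1 - G.q t (P.act t) v := by
        rw [Finset.sum_sub_distrib, G.q_sum,
          Finset.sum_ite_eq' Finset.univ v (fun _ => G.q t (P.act t) v), if_pos (Finset.mem_univ v)]
      have hpow : dmin G P.act ^ P.rk t ≤ dmin G P.act := by
        calc dmin G P.act ^ P.rk t ≤ dmin G P.act ^ 1 :=
              pow_le_pow_of_le_one (le_of_lt hδpos) hδle hrk1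
          _ = dmin G P.act := pow_one _
      linarith
    · -- the designated transition stays alive; use the inductive hypothesis at `v`
      have hvC : v ∈ C := P.subC hvW
      have hQv : Qm G P.act C D t v = G.q t (P.act t) v := by
        unfold Qm
        rw [ind_of _ ⟨hvC, hvD⟩, one_mul]
      have hrkv : P.rk v ≤ r := by omega
      have hkv : P.rk v ≤ k' := by omega
      have hIH := ih v hvW hvD hrkv k' hkv
      set c := dmin G P.act ^ P.rk v with hc
      have hcnn : 0 ≤ c := pow_nonneg (le_of_lt hδpos) _
      have hbound : ∑ u : S, Qm G P.act C D t u * rs G P.act C D k' u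
          ≤ ∑ u : S, (Qm G P.act C D t u - if u = v then Qm G P.act C D t v * c else 0) := by
        refine Finset.sum_le_sum fun u _ => ?_
        by_cases hu : u = v
        · subst hu
          rw [if_pos rfl]
          have h2 := Qm_nonneg G P.act C D t u
          nlinarith
        · rw [if_neg hu, sub_zero]
          have h1 := Qm_nonneg G P.act C D t u
          have h3 := rs_le_one G P.act C D k' u
          have h4 := rs_nonneg G P.act C D k' u
          nlinarith
      have hsplit : ∑ u : S, (Qm G P.act C D t u - if u = v then Qm G P.act C D t v * c else 0)
          = (∑ u : S, Qm G P.act C D t u) - Qm G P.act C D t v * c := by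
        rw [Finset.sum_sub_distrib,
          Finset.sum_ite_eq' Finset.univ v (fun _ => Qm G P.act C D t v * c),
          if_pos (Finset.mem_univ v)]
      have hrow := Qm_rowsum_le G P.act C D t
      have hpow : dmin G P.act ^ P.rk t ≤ dmin G P.act ^ (P.rk v + 1) :=
        pow_le_pow_of_le_one (le_of_lt hδpos) hδle (by omega)
      have hpow2 : dmin G P.act ^ (P.rk v + 1) = dmin G P.act ^ P.rk v * dmin G P.act :=
        pow_succ _ _
      have hqc : dmin G P.act * c ≤ G.q t (P.act t) v * c := by
        nlinarith
      have hfin : ∑ u : S, Qm G P.act C D t u * rs G P.act C D k' u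
          ≤ (∑ u : S, Qm G P.act C D t u) - Qm G P.act C D t v * c := by
        rw [← hsplit]; exact hbound
      rw [hQv] at hfin
      nlinarith

lemma M_decay (hsW : s ∈ P.W) (K : ℕ) (hK : ∀ t : S, P.rk t ≤ K) (n : ℕ) :
    msum G (corrOf (pstrat P.act)) s C D (fun u => u ∈ C ∧ u ∉ D) (n + K)
      ≤ (1 - dmin G P.act ^ K)
          * msum G (corrOf (pstrat P.act)) s C D (fun u => u ∈ C ∧ u ∉ D) n := by
  have hδpos := dmin_pos G P.act
  have hδle := dmin_le_one G P.act
  rw [M_shift, M_eq_av, Finset.mul_sum]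
  refine Finset.sum_le_sum fun t _ => ?_
  by_cases hav : av G (corrOf (pstrat P.act)) s C D n t = 0
  · rw [hav, zero_mul, mul_zero]
  · have htW := av_mem_W C D P s hsW n t hav
    have htAl : t ∈ C ∧ t ∉ D := by
      unfold av at hav
      exact ind_prop_of_ne_zero (fun h => hav (by rw [h, zero_mul]))
    have h1 := rs_rank_bound C D P (P.rk t) t htW htAl.2 (le_refl _) K (hK t)
    have hpow : dmin G P.act ^ K ≤ dmin G P.act ^ P.rk t :=
      pow_le_pow_of_le_one (le_of_lt hδpos) hδle (hK t)
    have h2 : rs G P.act C D K t ≤ 1 - dmin G P.act ^ K := by linarith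
    have h3 := av_nonneg G (corrOf (pstrat P.act)) s C D n t
    nlinarith

lemma M_tendsto_zero (hsW : s ∈ P.W) :
    Tendsto (fun n => msum G (corrOf (pstrat P.act)) s C D (fun u => u ∈ C ∧ u ∉ D) n)
      atTop (𝓝 0) := by
  set τ := corrOf (pstrat (ι := ι) (A := A) P.act) with hτ
  set Mf := fun n => msum G τ s C D (fun u => u ∈ C ∧ u ∉ D) n with hMf
  have hδpos := dmin_pos G P.act
  have hδle := dmin_le_one G P.act
  set K := Finset.univ.sup P.rk with hKdef
  have hK : ∀ t : S, P.rk t ≤ K := fun t => Finset.le_sup (Finset.mem_univ t)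
  set c := 1 - dmin G P.act ^ K with hc
  have hc0 : 0 ≤ c := by
    have := pow_le_one₀ (le_of_lt hδpos) hδle (n := K)
    linarith
  have hc1 : c < 1 := by
    have := pow_pos hδpos K
    linarith
  have hanti : Antitone Mf :=
    antitone_nat_of_succ_le (fun n => M_succ_le G τ s C D n)
  have hMnn : ∀ n, 0 ≤ Mf n := fun n => msum_nonneg G τ s C D _ n
  have hM0 : Mf 0 ≤ 1 := by
    show msum G τ s C D (fun u => u ∈ C ∧ u ∉ D) 0 ≤ 1
    rw [msum_zero]
    exact ind_le_one _
  have hjK : ∀ j, Mf (j * K) ≤ c ^ j := by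
    intro j
    induction j with
    | zero => simpa using hM0
    | succ j ih =>
      have h1 : (j + 1) * K = j * K + K := by ring
      have h2 := M_decay C D P s hsW K hK (j * K)
      calc Mf ((j+1) * K) = Mf (j * K + K) := by rw [h1]
        _ ≤ c * Mf (j * K) := h2
        _ ≤ c * c ^ j := by nlinarith [hMnn (j * K)]
        _ = c ^ (j + 1) := by ring
  rw [Metric.tendsto_atTop]
  intro ε hε
  obtain ⟨j, hj⟩ := exists_pow_lt_of_lt_one hε hc1
  refine ⟨j * K, fun n hn => ?_⟩
  have h1 : Mf n ≤ Mf (j * K) := hanti hn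
  have h2 : Mf n < ε := lt_of_le_of_lt (le_trans h1 (hjK j)) hj
  rw [Real.dist_eq, sub_zero, abs_of_nonneg (hMnn n)]
  exact h2

theorem pack_reach (hsW : s ∈ P.W) (hsD : s ∉ D) :
    G.reachInProb (corrOf (pstrat P.act)) s C D = 1 := by
  rw [reachInProb_eq]
  exact tsum_R_eq_one G (corrOf (pstrat P.act)) s C D (pack_L_zero C D P s hsW)
    (M_tendsto_zero C D P s hsW)

end PackFacts

end SGX
namespace SGX
set_option linter.unusedSectionVars false
variable {ι S : Type*} {A : ι → Type*} [Fintype ι] [DecidableEq ι] [Fintype S]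
  [∀ i, Fintype (A i)] [Nonempty S] [∀ i, Nonempty (A i)]
open StochGame Filter Topology

lemma alF_split (C D : Set S) {m n0 : ℕ} (f : Fin (m + n0) → S × ActProf A) :
    alF C D f ↔ (alF C D (fun i : Fin m => f (Fin.castAdd n0 i))
      ∧ alF C D (fun j : Fin n0 => f (Fin.natAdd m j))) := by
  constructor
  · intro h; exact ⟨fun i => h _, fun j => h _⟩
  · rintro ⟨h1, h2⟩ k
    rcases finSumFinEquiv.surjective k with ⟨x, rfl⟩
    cases x with
    | inl i => simpa using h1 i
    | inr j => simpa using h2 j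

variable (G : StochGame ι S A)

lemma msum_decomp (τ : CorrStrategy ι S A) (s : S) (C D : Set S) (P : S → Prop)
    (n0 m : ℕ) :
    msum G τ s C D P (m + n0)
      = ∑ g : Fin n0 → S × ActProf A, ∑ t : S,
          (ind (alF C D g) * G.hprob τ s (List.ofFn g) t)
            * msum G (contC τ (List.ofFn g, t)) t C D P m := by
  unfold msum
  -- reindex the histories of length `m + n0`
  have step1 : (∑ f : Fin (m + n0) → S × ActProf A, ∑ u : S,
        ind (alF C D f) * ind (P u) * G.hprob τ s (List.ofFn f) u)
      = ∑ fg : (Fin m → S × ActProf A) × (Fin n0 → S × ActProf A), ∑ u : S,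
          ind (alF C D fg.1) * ind (alF C D fg.2) * ind (P u)
            * G.hprob τ s (List.ofFn fg.1 ++ List.ofFn fg.2) u := by
    refine Fintype.sum_equiv
      ((finSumFinEquiv.symm.arrowCongr (Equiv.refl (S × ActProf A))).trans
        (Equiv.sumArrowEquivProdArrow _ _ _))
      (fun f : Fin (m + n0) → S × ActProf A => ∑ u : S,
        ind (alF C D f) * ind (P u) * G.hprob τ s (List.ofFn f) u)
      (fun fg : (Fin m → S × ActProf A) × (Fin n0 → S × ActProf A) => ∑ u : S,
        ind (alF C D fg.1) * ind (alF C D fg.2) * ind (P u)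
          * G.hprob τ s (List.ofFn fg.1 ++ List.ofFn fg.2) u)
      fun f => ?_
    have h1 : ((finSumFinEquiv.symm.arrowCongr (Equiv.refl (S × ActProf A))).trans
        (Equiv.sumArrowEquivProdArrow _ _ _)) f
        = (fun i : Fin m => f (Fin.castAdd n0 i), fun j : Fin n0 => f (Fin.natAdd m j)) := by
      refine Prod.ext (funext fun i => ?_) (funext fun j => ?_) <;>
        simp [Equiv.sumArrowEquivProdArrow, Equiv.arrowCongr]
    rw [h1]
    refine Finset.sum_congr rfl fun u _ => ?_
    have h2 : List.ofFn f = List.ofFn (fun i : Fin m => f (Fin.castAdd n0 i))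
        ++ List.ofFn (fun j : Fin n0 => f (Fin.natAdd m j)) := List.ofFn_add (f := f)
    have h3 : ind (alF C D f) = ind (alF C D (fun i : Fin m => f (Fin.castAdd n0 i)))
        * ind (alF C D (fun j : Fin n0 => f (Fin.natAdd m j))) := by
      rw [show ind (alF C D f) = ind ((alF C D (fun i : Fin m => f (Fin.castAdd n0 i))
          ∧ alF C D (fun j : Fin n0 => f (Fin.natAdd m j)))) from by
            by_cases h : alF C D f
            · rw [ind_of _ h, ind_of _ ((alF_split C D f).mp h)]
            · rw [ind_of_not _ h, ind_of_not _ (fun hh => h ((alF_split C D f).mpr hh))],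
        ind_and]
    rw [h3, ← h2]
    all_goals ring
  rw [step1, Fintype.sum_prod_type]
  show (∑ f1 : Fin m → S × ActProf A, ∑ g : Fin n0 → S × ActProf A, ∑ u : S,
      ind (alF C D f1) * ind (alF C D g) * ind (P u)
        * G.hprob τ s (List.ofFn f1 ++ List.ofFn g) u) = _
  -- expand the transition probability along the splitting time
  have step2 : ∀ (f1 : Fin m → S × ActProf A) (g : Fin n0 → S × ActProf A) (u : S),
      ind (alF C D f1) * ind (alF C D g) * ind (P u)
          * G.hprob τ s (List.ofFn f1 ++ List.ofFn g) u
      = ∑ t : S, (ind (alF C D g) * G.hprob τ s (List.ofFn g) t)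
          * (ind (alF C D f1) * ind (P u)
              * G.hprob (contC τ (List.ofFn g, t)) t (List.ofFn f1) u) := by
    intro f1 g u
    rw [hprob_append, Finset.mul_sum]
    exact Finset.sum_congr rfl fun t _ => by ring
  rw [Finset.sum_congr rfl fun f1 _ => Finset.sum_congr rfl fun g _ =>
    Finset.sum_congr rfl fun u _ => step2 f1 g u]
  -- reorder the four sums
  calc (∑ f1 : Fin m → S × ActProf A, ∑ g : Fin n0 → S × ActProf A, ∑ u : S, ∑ t : S,
        (ind (alF C D g) * G.hprob τ s (List.ofFn g) t)
          * (ind (alF C D f1) * ind (P u)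
              * G.hprob (contC τ (List.ofFn g, t)) t (List.ofFn f1) u))
      = ∑ g : Fin n0 → S × ActProf A, ∑ f1 : Fin m → S × ActProf A, ∑ u : S, ∑ t : S,
          (ind (alF C D g) * G.hprob τ s (List.ofFn g) t)
            * (ind (alF C D f1) * ind (P u)
                * G.hprob (contC τ (List.ofFn g, t)) t (List.ofFn f1) u) := Finset.sum_comm
    _ = ∑ g : Fin n0 → S × ActProf A, ∑ f1 : Fin m → S × ActProf A, ∑ t : S, ∑ u : S,
          (ind (alF C D g) * G.hprob τ s (List.ofFn g) t)
            * (ind (alF C D f1) * ind (P u)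
                * G.hprob (contC τ (List.ofFn g, t)) t (List.ofFn f1) u) :=
        Finset.sum_congr rfl fun g _ => Finset.sum_congr rfl fun f1 _ => Finset.sum_comm
    _ = ∑ g : Fin n0 → S × ActProf A, ∑ t : S, ∑ f1 : Fin m → S × ActProf A, ∑ u : S,
          (ind (alF C D g) * G.hprob τ s (List.ofFn g) t)
            * (ind (alF C D f1) * ind (P u)
                * G.hprob (contC τ (List.ofFn g, t)) t (List.ofFn f1) u) :=
        Finset.sum_congr rfl fun g _ => Finset.sum_comm
    _ = ∑ g : Fin n0 → S × ActProf A, ∑ t : S,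
          (ind (alF C D g) * G.hprob τ s (List.ofFn g) t)
            * msum G (contC τ (List.ofFn g, t)) t C D P m := by
        refine Finset.sum_congr rfl fun g _ => Finset.sum_congr rfl fun t _ => ?_
        unfold msum
        rw [Finset.mul_sum]
        refine Finset.sum_congr rfl fun f1 _ => ?_
        rw [Finset.mul_sum]

end SGX
namespace SGX
set_option linter.unusedSectionVars false
variable {ι S : Type*} {A : ι → Type*} [Fintype ι] [DecidableEq ι] [Fintype S]
  [∀ i, Fintype (A i)] [Nonempty S] [∀ i, Nonempty (A i)]
open StochGame Filter Topology

lemma sum_ind_single {α : Type*} [Fintype α] (x : α) (c : α → ℝ) :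
    ∑ t : α, ind (t = x) * c t = c x := by
  have h : ∀ t : α, ind (t = x) * c t = if t = x then c t else 0 := by
    intro t
    by_cases ht : t = x
    · rw [ind_of _ ht, one_mul, if_pos ht]
    · rw [ind_of_not _ ht, zero_mul, if_neg ht]
  rw [Finset.sum_congr rfl fun t _ => h t, Finset.sum_ite_eq' Finset.univ x c,
    if_pos (Finset.mem_univ x)]

variable (G : StochGame ι S A) (τ : CorrStrategy ι S A) (s : S) (C D : Set S)

lemma L_zero_of_reach (hreach : G.reachInProb τ s C D = 1) :
    ∀ k, msum G τ s C D (fun u => u ∉ C) k = 0 := by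
  have hsum := R_summable G τ s C D
  have htsum : ∑' n, msum G τ s C D (fun u => u ∈ C ∧ u ∈ D) n = 1 := by
    rw [← reachInProb_eq]; exact hreach
  intro k
  have key : ∑ j ∈ Finset.range (k + 1), msum G τ s C D (fun u => u ∉ C) j ≤ 0 := by
    have hub : ∀ n, k ≤ n →
        ∑ i ∈ Finset.range (n + 1), msum G τ s C D (fun u => u ∈ C ∧ u ∈ D) i
          ≤ 1 - ∑ j ∈ Finset.range (k + 1), msum G τ s C D (fun u => u ∉ C) j := by
      intro n hn
      have hc := cumul G τ s C D n
      have hsplit : ∑ i ∈ Finset.range (n + 1),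
          (msum G τ s C D (fun u => u ∈ C ∧ u ∈ D) i + msum G τ s C D (fun u => u ∉ C) i)
          = (∑ i ∈ Finset.range (n + 1), msum G τ s C D (fun u => u ∈ C ∧ u ∈ D) i)
            + ∑ i ∈ Finset.range (n + 1), msum G τ s C D (fun u => u ∉ C) i :=
        Finset.sum_add_distrib
      have hmono : ∑ j ∈ Finset.range (k + 1), msum G τ s C D (fun u => u ∉ C) j
          ≤ ∑ i ∈ Finset.range (n + 1), msum G τ s C D (fun u => u ∉ C) i :=
        Finset.sum_le_sum_of_subset_of_nonneg
          (Finset.range_subset_range.mpr (by omega))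
          (fun i _ _ => msum_nonneg G τ s C D _ i)
      have hM := msum_nonneg G τ s C D (fun u => u ∈ C ∧ u ∉ D) n
      linarith
    have hlim : Tendsto (fun n => ∑ i ∈ Finset.range (n + 1),
        msum G τ s C D (fun u => u ∈ C ∧ u ∈ D) i) atTop (𝓝 1) := by
      rw [← htsum]
      exact hsum.hasSum.tendsto_sum_nat.comp (tendsto_add_atTop_nat 1)
    have hle := le_of_tendsto hlim (Filter.eventually_atTop.mpr ⟨k, hub⟩)
    linarith
  have h1 : msum G τ s C D (fun u => u ∉ C) k
      ≤ ∑ j ∈ Finset.range (k + 1), msum G τ s C D (fun u => u ∉ C) j :=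
    Finset.single_le_sum (fun j _ => msum_nonneg G τ s C D _ j)
      (Finset.mem_range.mpr (by omega))
  have h2 := msum_nonneg G τ s C D (fun u => u ∉ C) k
  linarith

lemma mem_C_of_alive (hL : ∀ k, msum G τ s C D (fun u => u ∉ C) k = 0)
    (l : List (S × ActProf A)) (v : S) (hal : alL C D l) (hpos : 0 < G.hprob τ s l v) :
    v ∈ C := by
  by_contra hv
  have h0 := hL l.length
  set g0 : Fin l.length → S × ActProf A := fun k => l.get k with hg0def
  have hg0 : List.ofFn g0 = l := List.ofFn_get l
  have halF : alF C D g0 := fun k => hal (l.get k) (l.get_mem k)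
  have hterm : 0 < ind (alF C D g0) * ind ((fun u => u ∉ C) v)
      * G.hprob τ s (List.ofFn g0) v := by
    rw [hg0, ind_of _ halF, ind_of _ hv, one_mul, one_mul]
    exact hpos
  have hinner : ∀ f : Fin l.length → S × ActProf A,
      0 ≤ ∑ u : S, ind (alF C D f) * ind ((fun u => u ∉ C) u)
        * G.hprob τ s (List.ofFn f) u :=
    fun f => Finset.sum_nonneg fun u _ =>
      mul_nonneg (mul_nonneg (ind_nonneg _) (ind_nonneg _)) (hprob_nonneg G τ s _ u)
  have h1 : ind (alF C D g0) * ind ((fun u => u ∉ C) v) * G.hprob τ s (List.ofFn g0) v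
      ≤ ∑ u : S, ind (alF C D g0) * ind ((fun u => u ∉ C) u)
        * G.hprob τ s (List.ofFn g0) u :=
    Finset.single_le_sum (f := fun u : S => ind (alF C D g0) * ind ((fun u => u ∉ C) u)
        * G.hprob τ s (List.ofFn g0) u)
      (fun u _ =>
        mul_nonneg (mul_nonneg (ind_nonneg _) (ind_nonneg _)) (hprob_nonneg G τ s _ u))
      (Finset.mem_univ v)
  have h2 : (∑ u : S, ind (alF C D g0) * ind ((fun u => u ∉ C) u)
      * G.hprob τ s (List.ofFn g0) u) ≤ msum G τ s C D (fun u => u ∉ C) l.length :=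
    Finset.single_le_sum (fun f _ => hinner f) (Finset.mem_univ g0)
  rw [h0] at h2
  linarith

lemma exists_alive_extension (hreach : G.reachInProb τ s C D = 1)
    (l0 : List (S × ActProf A)) (u0 : S) (hal0 : alL C D l0)
    (hpos0 : 0 < G.hprob τ s l0 u0) :
    ∃ (m : ℕ) (f1 : Fin m → S × ActProf A) (v : S),
      alF C D f1 ∧ (v ∈ C ∧ v ∈ D)
        ∧ 0 < G.hprob (contC τ (l0, u0)) u0 (List.ofFn f1) v := by
  by_contra hnone
  push_neg at hnone
  have hcontR : ∀ m, msum G (contC τ (l0, u0)) u0 C D (fun u => u ∈ C ∧ u ∈ D) m = 0 := by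
    intro m
    refine Finset.sum_eq_zero fun f1 _ => Finset.sum_eq_zero fun v _ => ?_
    by_cases h1 : alF C D f1
    · by_cases h2 : v ∈ C ∧ v ∈ D
      · have h3 := hnone m f1 v h1 h2
        have h4 := hprob_nonneg G (contC τ (l0, u0)) u0 (List.ofFn f1) v
        have h5 : G.hprob (contC τ (l0, u0)) u0 (List.ofFn f1) v = 0 := le_antisymm h3 h4
        rw [h5, mul_zero]
      · rw [ind_of_not _ h2, mul_zero, zero_mul]
    · rw [ind_of_not _ h1, zero_mul, zero_mul]
  set n0 := l0.length with hn0
  set g0 : Fin n0 → S × ActProf A := fun k => l0.get k with hg0def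
  have hg0 : List.ofFn g0 = l0 := List.ofFn_get l0
  have halF0 : alF C D g0 := fun k => hal0 (l0.get k) (l0.get_mem k)
  set w : (Fin n0 → S × ActProf A) → S → ℝ :=
    fun g t => ind (alF C D g) * G.hprob τ s (List.ofFn g) t with hwdef
  have hw_nn : ∀ g t, 0 ≤ w g t :=
    fun g t => mul_nonneg (ind_nonneg _) (hprob_nonneg G τ s _ t)
  have hw00 : w g0 u0 = G.hprob τ s l0 u0 := by
    rw [hwdef]
    beta_reduce
    rw [hg0, ind_of _ halF0, one_mul]
  set cp : (Fin n0 → S × ActProf A) → S → ℝ :=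
    fun g t => ∑' mm, msum G (contC τ (List.ofFn g, t)) t C D (fun u => u ∈ C ∧ u ∈ D) mm
    with hcpdef
  have hcp_le : ∀ g t, cp g t ≤ 1 := fun g t => tsumR_le_one G _ t C D
  have hcp_nn : ∀ g t, 0 ≤ cp g t := fun g t =>
    tsum_nonneg (fun mm => msum_nonneg G (contC τ (List.ofFn g, t)) t C D _ mm)
  have hcp00 : cp g0 u0 = 0 := by
    rw [hcpdef]
    beta_reduce
    rw [hg0]
    rw [tsum_congr hcontR]
    exact tsum_zero
  have hsumR := R_summable G τ s C D
  have htsum : ∑' n, msum G τ s C D (fun u => u ∈ C ∧ u ∈ D) n = 1 := by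
    rw [← reachInProb_eq]; exact hreach
  have hL := L_zero_of_reach G τ s C D hreach
  have hsummand : ∀ (g : Fin n0 → S × ActProf A) (t : S),
      Summable (fun mm => w g t
        * msum G (contC τ (List.ofFn g, t)) t C D (fun u => u ∈ C ∧ u ∈ D) mm) :=
    fun g t => (R_summable G (contC τ (List.ofFn g, t)) t C D).mul_left _
  have htail : ∑' (mm : ℕ), msum G τ s C D (fun u => u ∈ C ∧ u ∈ D) (mm + n0)
      = ∑ g : Fin n0 → S × ActProf A, ∑ t : S, w g t * cp g t := by
    calc ∑' (mm : ℕ), msum G τ s C D (fun u => u ∈ C ∧ u ∈ D) (mm + n0)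
        = ∑' (mm : ℕ), ∑ g : Fin n0 → S × ActProf A, ∑ t : S,
            w g t * msum G (contC τ (List.ofFn g, t)) t C D (fun u => u ∈ C ∧ u ∈ D) mm :=
          tsum_congr fun mm => msum_decomp G τ s C D _ n0 mm
      _ = ∑ g : Fin n0 → S × ActProf A, ∑' (mm : ℕ), ∑ t : S,
            w g t * msum G (contC τ (List.ofFn g, t)) t C D (fun u => u ∈ C ∧ u ∈ D) mm :=
          Summable.tsum_finsetSum fun g _ => summable_sum fun t _ => hsummand g t
      _ = ∑ g : Fin n0 → S × ActProf A, ∑ t : S, ∑' (mm : ℕ),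
            w g t * msum G (contC τ (List.ofFn g, t)) t C D (fun u => u ∈ C ∧ u ∈ D) mm :=
          Finset.sum_congr rfl fun g _ => Summable.tsum_finsetSum fun t _ => hsummand g t
      _ = ∑ g : Fin n0 → S × ActProf A, ∑ t : S, w g t * cp g t :=
          Finset.sum_congr rfl fun g _ => Finset.sum_congr rfl fun t _ => tsum_mul_left
  have hbound : ∑ g : Fin n0 → S × ActProf A, ∑ t : S, w g t * cp g t
      ≤ (∑ g : Fin n0 → S × ActProf A, ∑ t : S, w g t) - w g0 u0 := by
    have hterm : ∀ (g : Fin n0 → S × ActProf A) (t : S),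
        w g t * cp g t ≤ w g t - ind (g = g0) * (ind (t = u0) * w g0 u0) := by
      intro g t
      by_cases hg : g = g0
      · by_cases ht : t = u0
        · subst hg; subst ht
          rw [hcp00, mul_zero, ind_of _ rfl, ind_of _ rfl]
          linarith
        · rw [ind_of_not _ ht, zero_mul, mul_zero, sub_zero]
          nlinarith [hw_nn g t, hcp_le g t, hcp_nn g t]
      · rw [ind_of_not _ hg, zero_mul, sub_zero]
        nlinarith [hw_nn g t, hcp_le g t, hcp_nn g t]
    calc ∑ g : Fin n0 → S × ActProf A, ∑ t : S, w g t * cp g t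
        ≤ ∑ g : Fin n0 → S × ActProf A, ∑ t : S,
            (w g t - ind (g = g0) * (ind (t = u0) * w g0 u0)) :=
          Finset.sum_le_sum fun g _ => Finset.sum_le_sum fun t _ => hterm g t
      _ = (∑ g : Fin n0 → S × ActProf A, ∑ t : S, w g t) - w g0 u0 := by
          have h1 : ∀ g : Fin n0 → S × ActProf A,
              ∑ t : S, (w g t - ind (g = g0) * (ind (t = u0) * w g0 u0))
                = (∑ t : S, w g t) - ind (g = g0) * w g0 u0 := by
            intro g
            rw [Finset.sum_sub_distrib]
            congr 1
            rw [← Finset.mul_sum, sum_ind_single u0 (fun _ => w g0 u0)]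
          rw [Finset.sum_congr rfl fun g _ => h1 g, Finset.sum_sub_distrib,
            sum_ind_single g0 (fun _ => w g0 u0)]
  have hT : (∑ g : Fin n0 → S × ActProf A, ∑ t : S, w g t)
      = msum G τ s C D (fun _ => True) n0 := by
    unfold msum
    refine Finset.sum_congr rfl fun g _ => Finset.sum_congr rfl fun t _ => ?_
    rw [ind_true]
    ring
  have hone : (∑ i ∈ Finset.range n0, msum G τ s C D (fun u => u ∈ C ∧ u ∈ D) i)
      + msum G τ s C D (fun _ => True) n0 = 1 := by
    have hc := cumul G τ s C D n0
    have hpart := msum_partition G τ s C D n0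
    have hsplit : ∑ i ∈ Finset.range (n0 + 1),
        (msum G τ s C D (fun u => u ∈ C ∧ u ∈ D) i + msum G τ s C D (fun u => u ∉ C) i)
        = (∑ i ∈ Finset.range (n0 + 1), msum G τ s C D (fun u => u ∈ C ∧ u ∈ D) i)
          + ∑ i ∈ Finset.range (n0 + 1), msum G τ s C D (fun u => u ∉ C) i :=
      Finset.sum_add_distrib
    have hLs : ∑ i ∈ Finset.range (n0 + 1), msum G τ s C D (fun u => u ∉ C) i = 0 :=
      Finset.sum_eq_zero fun i _ => hL i
    have hRsucc : ∑ i ∈ Finset.range (n0 + 1), msum G τ s C D (fun u => u ∈ C ∧ u ∈ D) i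
        = (∑ i ∈ Finset.range n0, msum G τ s C D (fun u => u ∈ C ∧ u ∈ D) i)
          + msum G τ s C D (fun u => u ∈ C ∧ u ∈ D) n0 := Finset.sum_range_succ _ n0
    have hL0 := hL n0
    linarith
  have hfinal := hsumR.sum_add_tsum_nat_add n0
  rw [htsum] at hfinal
  have hwpos : 0 < w g0 u0 := by rw [hw00]; exact hpos0
  rw [htail] at hfinal
  linarith
end SGX
namespace SGX
set_option linter.unusedSectionVars false
variable {ι S : Type*} {A : ι → Type*} [Fintype ι] [DecidableEq ι] [Fintype S]
  [∀ i, Fintype (A i)] [Nonempty S] [∀ i, Nonempty (A i)]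
open StochGame Filter Topology

lemma pos_of_mul3 {x y z : ℝ} (hx : 0 ≤ x) (hy : 0 ≤ y) (hz : 0 ≤ z) (h : 0 < x * y * z) :
    0 < x ∧ 0 < y ∧ 0 < z := by
  rcases mul_pos_iff.mp h with ⟨hxy, hz'⟩ | ⟨hxy, _⟩
  · rcases mul_pos_iff.mp hxy with ⟨hx', hy'⟩ | ⟨hx', _⟩
    · exact ⟨hx', hy', hz'⟩
    · linarith
  · nlinarith

variable (G : StochGame ι S A)

/-- An action is OK at `u` if it is in the support of `τ` after some positive-probability
alive history ending at `u`. -/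
def OKact (τ : CorrStrategy ι S A) (s : S) (C D : Set S) (u : S) (a : ActProf A) : Prop :=
  ∃ l, alL C D l ∧ 0 < G.hprob τ s l u ∧ 0 < (τ (l, u)).1 a

/-- `D` is reachable from `u` in `m` supported steps. -/
def ReachN (τ : CorrStrategy ι S A) (s : S) (C D : Set S) : ℕ → S → Prop
  | 0 => fun u => u ∈ D
  | m + 1 => fun u => ∃ a v, OKact G τ s C D u a ∧ 0 < G.q u a v ∧ ReachN τ s C D m v

/-- `u` is reachable with positive probability along an alive history. -/
def posH (τ : CorrStrategy ι S A) (s : S) (C D : Set S) (u : S) : Prop :=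
  ∃ l, alL C D l ∧ 0 < G.hprob τ s l u

def Wset (τ : CorrStrategy ι S A) (s : S) (C D : Set S) : Set S :=
  {v | v ∈ C ∧ (v ∈ D ∨ posH G τ s C D v)}

noncomputable def rkf (τ : CorrStrategy ι S A) (s : S) (C D : Set S) (u : S) : ℕ :=
  if h : ∃ m, ReachN G τ s C D m u then Nat.find h else 0

variable (τ : CorrStrategy ι S A) (s : S) (C D : Set S)

lemma path_reach (l0 : List (S × ActProf A)) (u0 : S) (hal0 : alL C D l0)
    (hp0 : 0 < G.hprob τ s l0 u0) :
    ∀ (l' : List (S × ActProf A)) (w : S), alL C D l' →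
      0 < G.hprob (contC τ (l0, u0)) u0 l' w →
      (∃ m, ReachN G τ s C D m w) → ∃ m, ReachN G τ s C D m u0 := by
  intro l'
  induction l' with
  | nil =>
    intro w _ hpos hw
    have he : G.hprob (contC τ (l0, u0)) u0 [] w = ind (w = u0) := hprob_nil G _ u0 w
    rw [he] at hpos
    have hwu : w = u0 := ind_prop_of_ne_zero (ne_of_gt hpos)
    exact hwu ▸ hw
  | cons p l'' ih =>
    intro w hal hpos hw
    rw [hprob_cons] at hpos
    obtain ⟨h1, h2, hq⟩ := pos_of_mul3 (hprob_nonneg G _ u0 l'' p.1)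
      (((contC τ (l0, u0)) (l'', p.1)).2.1 p.2) (G.q_nonneg p.1 p.2 w) hpos
    have halp : p.1 ∈ C ∧ p.1 ∉ D := hal p List.mem_cons_self
    have hal'' : alL C D l'' := fun x hx => hal x (List.mem_cons_of_mem _ hx)
    have happ : 0 < G.hprob τ s (l'' ++ l0) p.1 := by
      rw [hprob_append]
      refine lt_of_lt_of_le (mul_pos hp0 h1)
        (Finset.single_le_sum
          (f := fun t => G.hprob τ s l0 t * G.hprob (contC τ (l0, t)) t l'' p.1)
          (fun t _ => mul_nonneg (hprob_nonneg G τ s l0 t) (hprob_nonneg G _ t l'' p.1))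
          (Finset.mem_univ u0))
    have halapp : alL C D (l'' ++ l0) := fun x hx =>
      (List.mem_append.mp hx).elim (hal'' x) (hal0 x)
    have hOK : OKact G τ s C D p.1 p.2 := ⟨l'' ++ l0, halapp, happ, h2⟩
    obtain ⟨m, hm⟩ := hw
    exact ih p.1 hal'' h1 ⟨m + 1, ⟨p.2, w, hOK, hq, hm⟩⟩

lemma reach_exists (hreach : G.reachInProb τ s C D = 1) (u : S)
    (huC : u ∈ C) (huD : u ∉ D) (hpos : posH G τ s C D u) :
    ∃ m, ReachN G τ s C D m u := by
  obtain ⟨l, hal, hp⟩ := hpos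
  obtain ⟨m, f1, v, hf1, hv, hcont⟩ := exists_alive_extension G τ s C D hreach l u hal hp
  have hl' : alL C D (List.ofFn f1) := by
    intro p hp'
    obtain ⟨k, hk⟩ := List.mem_ofFn.mp hp'
    exact hk ▸ hf1 k
  exact path_reach G τ s C D l u hal hp (List.ofFn f1) v hl' hcont ⟨0, hv.2⟩

lemma ok_closed (hL : ∀ k, msum G τ s C D (fun u => u ∉ C) k = 0)
    (u : S) (a : ActProf A) (v : S) (huC : u ∈ C) (huD : u ∉ D)
    (hOK : OKact G τ s C D u a) (hq : 0 < G.q u a v) :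
    v ∈ Wset G τ s C D := by
  obtain ⟨l, hal, hpl, hpa⟩ := hOK
  have halc : alL C D ((u, a) :: l) := by
    intro p hp
    rcases List.mem_cons.mp hp with rfl | hmem
    exacts [⟨huC, huD⟩, hal p hmem]
  have hpos : 0 < G.hprob τ s ((u, a) :: l) v := by
    rw [hprob_cons]
    exact mul_pos (mul_pos hpl hpa) hq
  have hvC : v ∈ C := mem_C_of_alive G τ s C D hL ((u, a) :: l) v halc hpos
  by_cases hvD : v ∈ D
  · exact ⟨hvC, Or.inl hvD⟩
  · exact ⟨hvC, Or.inr ⟨(u, a) :: l, halc, hpos⟩⟩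

lemma key_exists (hreach : G.reachInProb τ s C D = 1) (t : S)
    (htW : t ∈ Wset G τ s C D) (htD : t ∉ D) :
    ∃ a : ActProf A, (∀ v, 0 < G.q t a v → v ∈ Wset G τ s C D)
      ∧ (∃ v, 0 < G.q t a v ∧ v ∈ Wset G τ s C D
          ∧ rkf G τ s C D v < rkf G τ s C D t) := by
  have hL := L_zero_of_reach G τ s C D hreach
  have hpos : posH G τ s C D t := htW.2.resolve_left htD
  have hex : ∃ m, ReachN G τ s C D m t :=
    reach_exists G τ s C D hreach t htW.1 htD hpos
  have hrk : rkf G τ s C D t = Nat.find hex := dif_pos hex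
  have hspec : ReachN G τ s C D (Nat.find hex) t := Nat.find_spec hex
  have hne : Nat.find hex ≠ 0 := by
    intro h0
    rw [h0] at hspec
    exact htD hspec
  obtain ⟨m', hm'⟩ := Nat.exists_eq_succ_of_ne_zero hne
  rw [hm'] at hspec
  obtain ⟨a, v, hOK, hq, hRv⟩ := hspec
  refine ⟨a, fun v' hv' => ok_closed G τ s C D hL t a v' htW.1 htD hOK hv', v, hq,
    ok_closed G τ s C D hL t a v htW.1 htD hOK hq, ?_⟩
  have hexv : ∃ m, ReachN G τ s C D m v := ⟨m', hRv⟩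
  have h1 : rkf G τ s C D v = Nat.find hexv := dif_pos hexv
  have h2 : Nat.find hexv ≤ m' := Nat.find_le hRv
  rw [h1, hrk, hm']
  omega

theorem exists_pack (hreach : G.reachInProb τ s C D = 1) (hsD : s ∉ D) :
    ∃ P : Pack G C D, s ∈ P.W := by
  have hL := L_zero_of_reach G τ s C D hreach
  have hsC : s ∈ C := by
    have h0 := hL 0
    rw [msum_zero] at h0
    by_contra hs
    rw [ind_of _ hs] at h0
    norm_num at h0
  have hsW : s ∈ Wset G τ s C D := by
    refine ⟨hsC, Or.inr ⟨[], fun p hp => absurd hp List.not_mem_nil, ?_⟩⟩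
    rw [hprob_nil, ind_of _ rfl]
    norm_num
  refine ⟨⟨Wset G τ s C D,
    fun t => if h : t ∈ Wset G τ s C D ∧ t ∉ D
      then Classical.choose (key_exists G τ s C D hreach t h.1 h.2)
      else Classical.arbitrary _,
    rkf G τ s C D, fun t ht => ht.1, ?_, ?_⟩, hsW⟩
  · intro t htW htD v hv
    beta_reduce at hv
    rw [dif_pos (⟨htW, htD⟩ : t ∈ Wset G τ s C D ∧ t ∉ D)] at hv
    exact (Classical.choose_spec (key_exists G τ s C D hreach t htW htD)).1 v hv
  · intro t htW htD
    beta_reduce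
    rw [dif_pos (⟨htW, htD⟩ : t ∈ Wset G τ s C D ∧ t ∉ D)]
    exact (Classical.choose_spec (key_exists G τ s C D hreach t htW htD)).2

end SGX
namespace SGX
set_option linter.unusedSectionVars false
variable {ι S : Type*} {A : ι → Type*} [Fintype ι] [DecidableEq ι] [Fintype S]
  [∀ i, Fintype (A i)] [Nonempty S] [∀ i, Nonempty (A i)]
open StochGame Filter Topology

def Pack.empty (G : StochGame ι S A) (C D : Set S) : Pack G C D where
  W := ∅
  act := fun _ => Classical.arbitrary _
  rk := fun _ => 0
  subC := Set.empty_subset C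
  closed := fun t ht => absurd ht (Set.notMem_empty t)
  rank := fun t ht => absurd ht (Set.notMem_empty t)

def Pack.merge {G : StochGame ι S A} {C D : Set S} (P1 P2 : Pack G C D) : Pack G C D where
  W := P1.W ∪ P2.W
  act := fun t => if t ∈ P1.W then P1.act t else P2.act t
  rk := fun t => if t ∈ P1.W then P1.rk t else (Finset.univ.sup P1.rk) + 1 + P2.rk t
  subC := fun t ht => ht.elim (fun h => P1.subC h) (fun h => P2.subC h)
  closed := by
    intro t ht htD v hv
    beta_reduce at hv
    by_cases h1 : t ∈ P1.W
    · rw [if_pos h1] at hv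
      exact Or.inl (P1.closed t h1 htD v hv)
    · rw [if_neg h1] at hv
      exact Or.inr (P2.closed t (ht.resolve_left h1) htD v hv)
  rank := by
    intro t ht htD
    beta_reduce
    by_cases h1 : t ∈ P1.W
    · obtain ⟨v, hq, hvW, hlt⟩ := P1.rank t h1 htD
      refine ⟨v, by rw [if_pos h1]; exact hq, Or.inl hvW, ?_⟩
      rw [if_pos h1, if_pos hvW]
      exact hlt
    · obtain ⟨v, hq, hvW, hlt⟩ := P2.rank t (ht.resolve_left h1) htD
      refine ⟨v, by rw [if_neg h1]; exact hq, Or.inr hvW, ?_⟩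
      rw [if_neg h1]
      by_cases hv1 : v ∈ P1.W
      · rw [if_pos hv1]
        have hle := Finset.le_sup (f := P1.rk) (Finset.mem_univ v)
        omega
      · rw [if_neg hv1]
        omega

def Pack.enlarge {G : StochGame ι S A} {C : Set S} {d : S} (P : Pack G C {d})
    (D : Set S) (hd : d ∈ D) : Pack G C D where
  W := P.W
  act := P.act
  rk := P.rk
  subC := P.subC
  closed := fun t ht htD v hv =>
    P.closed t ht (fun h => htD (by rw [Set.mem_singleton_iff.mp h]; exact hd)) v hv
  rank := fun t ht htD =>
    P.rank t ht (fun h => htD (by rw [Set.mem_singleton_iff.mp h]; exact hd))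

lemma pack_union {G : StochGame ι S A} {C D : Set S} (F : Finset S)
    (hF : ∀ t ∈ F, ∃ P : Pack G C D, t ∈ P.W) :
    ∃ P : Pack G C D, ∀ t ∈ F, t ∈ P.W := by
  classical
  induction F using Finset.induction_on with
  | empty => exact ⟨Pack.empty G C D, fun t ht => absurd ht (Finset.notMem_empty t)⟩
  | @insert a F' hnew ih =>
    obtain ⟨P1, hP1⟩ := hF a (Finset.mem_insert_self a F')
    obtain ⟨P2, hP2⟩ := ih (fun t ht => hF t (Finset.mem_insert_of_mem ht))
    refine ⟨P1.merge P2, fun t ht => ?_⟩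
    rcases Finset.mem_insert.mp ht with rfl | hmem
    · exact Or.inl hP1
    · exact Or.inr (hP2 t hmem)

end SGX

open StochGame in
/-- If state `s` leads in `C` to state `s'`, then some pure stationary strategy profile
takes the play from `s` to `s'` before leaving `C`, with probability 1. Consequently,
if every state of `C` leads in `C` to every other state of `C`, then for every nonempty
`D ⊂ C` there is a pure stationary strategy profile that, from any initial state in
`C \ D`, leads the play to `D` without leaving `C`. -/
theorem leadsIn_pure_stationary
    {ι S : Type*} {A : ι → Type*} [Fintype ι] [DecidableEq ι] [Fintype S]
    [∀ i, Fintype (A i)] [Nonempty ι] [Nonempty S] [∀ i, Nonempty (A i)]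
    (G : StochGame ι S A) (hu : ∀ i s a, |G.u i s a| ≤ 1)
    (C : Set S) (s s' : S) (hs : s ∈ C) (hs' : s' ∈ C) (h : G.LeadsIn C s s') :
    (∃ σ : Profile ι S A, IsPureStationary σ ∧
        G.reachInProb (corrOf σ) s C {s'} = 1) ∧
    ((∀ t ∈ C, ∀ t' ∈ C, G.LeadsIn C t t') →
      ∀ D : Set S, D ⊂ C → D.Nonempty →
        ∃ σ : Profile ι S A, IsPureStationary σ ∧
          ∀ t ∈ C \ D, G.reachInProb (corrOf σ) t C D = 1) := by
  constructor
  · -- part 1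
    by_cases hss : s = s'
    · subst hss
      refine ⟨SGX.pstrat (fun _ => Classical.arbitrary _), SGX.pstrat_pure _, ?_⟩
      rw [SGX.reachInProb_eq]
      exact SGX.reach_one_of_start_target G _ s C {s} hs rfl
    · obtain ⟨σ0, hσ0⟩ := h
      have hsD : s ∉ ({s'} : Set S) := fun hmem => hss hmem
      obtain ⟨P, hsW⟩ := SGX.exists_pack G (corrOf σ0) s C {s'} hσ0 hsD
      exact ⟨SGX.pstrat P.act, SGX.pstrat_pure _, SGX.pack_reach C {s'} P s hsW hsD⟩
  · -- part 2
    intro hcomm D hDC hDne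
    obtain ⟨d, hd⟩ := hDne
    have hdC : d ∈ C := hDC.subset hd
    have hpacks : ∀ t ∈ (C \ D).toFinite.toFinset, ∃ P : SGX.Pack G C D, t ∈ P.W := by
      intro t ht
      rw [Set.Finite.mem_toFinset] at ht
      obtain ⟨σ0, hσ0⟩ := hcomm t ht.1 d hdC
      have htd : t ∉ ({d} : Set S) := fun hmem => ht.2 (by
        rw [Set.mem_singleton_iff.mp hmem]; exact hd)
      obtain ⟨P, hW⟩ := SGX.exists_pack G (corrOf σ0) t C {d} hσ0 htd
      exact ⟨P.enlarge D hd, hW⟩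
    obtain ⟨P, hP⟩ := SGX.pack_union _ hpacks
    refine ⟨SGX.pstrat P.act, SGX.pstrat_pure _, ?_⟩
    intro t ht
    have htW : t ∈ P.W := hP t (by rw [Set.Finite.mem_toFinset]; exact ht)
    exact SGX.pack_reach C D P t htW ht.2
end
end

section
/- Let C be a communicating set under E in a stochastic game, let s¹∈C, and let (σ^ε)_{ε>0} be a family of strategy profiles such that (a) σ^ε is an ε-perturbation of E for every ε>0, and (b) the limit exit probability μ(s¹,(σ^ε)_{ε>0},C;s,a) exists for every exit (s,a)∈𝓔(C). If (s,a)∈𝓔(C) is an exit with μ(s¹,(σ^ε)_{ε>0},C;s,a) > 0, then there exists an action profile a'∈A such that (W.1) q(C|s,a')=1, and (W.2) a' differs from a in the action of exactly one player. -/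
open Filter Topology
open scoped Classical

noncomputable section

section Aux

open StochGame

variable {ι S : Type*} {A : ι → Type*} [Fintype ι] [DecidableEq ι] [Fintype S]
  [∀ i, Fintype (A i)] [Nonempty ι] [Nonempty S] [∀ i, Nonempty (A i)]
  (G : StochGame ι S A)

lemma aux_qD_nonneg (s : S) (a : ActProf A) (C : Set S) : 0 ≤ G.qD s a C :=
  Finset.sum_nonneg fun s' _ => by
    by_cases h : s' ∈ C <;> simp [h, G.q_nonneg]

lemma aux_qD_le_one (s : S) (a : ActProf A) (C : Set S) : G.qD s a C ≤ 1 := by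
  rw [show (1:ℝ) = ∑ s' : S, G.q s a s' from (G.q_sum s a).symm]
  refine Finset.sum_le_sum fun s' _ => ?_
  by_cases h : s' ∈ C <;> simp [h, G.q_nonneg]

lemma aux_prodDist_apply (y : ∀ i, ProbVec (A i)) (b : ActProf A) :
    (prodDist y).1 b = ∏ i, (y i).1 (b i) := rfl

lemma aux_supp_stay (s : S) (C : Set S) (x : ∀ i, ProbVec (A i))
    (hx : G.qXD s x C = 1) (a' : ActProf A) (ha' : ∀ i, 0 < (x i).1 (a' i)) :
    G.qD s a' C = 1 := by
  have hsum0 : ∑ b : ActProf A, (prodDist x).1 b * (1 - G.qD s b C) = 0 := by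
    have h1 : ∑ b : ActProf A, (prodDist x).1 b = 1 := (prodDist x).2.2
    have h2 : ∑ b : ActProf A, (prodDist x).1 b * G.qD s b C = 1 := hx
    calc ∑ b : ActProf A, (prodDist x).1 b * (1 - G.qD s b C)
        = (∑ b : ActProf A, (prodDist x).1 b)
          - ∑ b : ActProf A, (prodDist x).1 b * G.qD s b C := by
          rw [← Finset.sum_sub_distrib]
          exact Finset.sum_congr rfl fun b _ => by ring
      _ = 0 := by rw [h1, h2]; ring
  have hnn : ∀ b ∈ Finset.univ (α := ActProf A),
      0 ≤ (prodDist x).1 b * (1 - G.qD s b C) := fun b _ =>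
    mul_nonneg ((prodDist x).2.1 b) (by linarith [aux_qD_le_one G s b C])
  have h0 := (Finset.sum_eq_zero_iff_of_nonneg hnn).1 hsum0 a' (Finset.mem_univ a')
  have hpos : 0 < (prodDist x).1 a' := by
    rw [aux_prodDist_apply]
    exact Finset.prod_pos fun i _ => ha' i
  have : (1 : ℝ) - G.qD s a' C = 0 := by
    by_contra hne
    exact (mul_ne_zero (ne_of_gt hpos) hne) h0
  linarith

lemma aux_pointwise (C : Set S) (s : S) (a : ActProf A)
    (hsC : s ∈ C) (hclosed : G.ClosedUnderE C)
    (hqa : G.qD s a C < 1)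
    (H : ¬ ∃ a' : ActProf A, G.qD s a' C = 1 ∧ ∃! i : ι, a i ≠ a' i)
    (K : ℕ) (hK : ∀ i, Fintype.card (A i) ≤ K) (hK1 : 1 ≤ K)
    (ε : ℝ) (hε : 0 < ε) (hεK : ε ≤ 1 / (2 * K))
    (y : ∀ i, ProbVec (A i))
    (hy : ∃ x ∈ G.Eset s, ∀ (i : ι) (b : A i), |(y i).1 b - (x i).1 b| < ε) :
    (prodDist y).1 a ≤ (K : ℝ) * ε *
      ∑ a'' : ActProf A, if G.IsExit C s a'' then (prodDist y).1 a'' else 0 := by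
  obtain ⟨x, hxE, hclose⟩ := hy
  have hKpos : (0 : ℝ) < K := by exact_mod_cast Nat.lt_of_lt_of_le Nat.zero_lt_one hK1
  have hqX : G.qXD s x C = 1 := hclosed s hsC x hxE
  -- find a coordinate where x puts zero mass on a i
  have hexi : ∃ i : ι, (x i).1 (a i) = 0 := by
    by_contra hno
    push_neg at hno
    have : G.qD s a C = 1 :=
      aux_supp_stay G s C x hqX a fun i => lt_of_le_of_ne ((x i).2.1 _) (Ne.symm (hno i))
    linarith
  obtain ⟨i, hxi⟩ := hexi
  have hyi : (y i).1 (a i) < ε := by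
    have := hclose i (a i)
    rw [hxi, sub_zero, abs_of_nonneg ((y i).2.1 _)] at this
    exact this
  -- find a maximizer b of (y i).1
  obtain ⟨b, -, hb⟩ := Finset.exists_max_image (Finset.univ (α := A i)) (fun b => (y i).1 b)
    ⟨Classical.arbitrary (A i), Finset.mem_univ _⟩
  have hynn : 0 ≤ (y i).1 b := (y i).2.1 b
  have hKyb : (1 : ℝ) ≤ (K : ℝ) * (y i).1 b := by
    have hcard : (Fintype.card (A i) : ℝ) ≤ K := by exact_mod_cast hK i
    calc (1 : ℝ) = ∑ b' : A i, (y i).1 b' := ((y i).2.2).symm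
      _ ≤ ∑ _b' : A i, (y i).1 b :=
        Finset.sum_le_sum fun b' _ => hb b' (Finset.mem_univ _)
      _ = (Fintype.card (A i) : ℝ) * (y i).1 b := by
        rw [Finset.sum_const, nsmul_eq_mul, Finset.card_univ]
      _ ≤ (K : ℝ) * (y i).1 b := mul_le_mul_of_nonneg_right hcard hynn
  have hbK : 1 / (K : ℝ) ≤ (y i).1 b := by
    rw [div_le_iff₀ hKpos]
    linarith [mul_comm ((y i).1 b) ((K : ℝ))]
  have hhalf : (1 : ℝ) / (2 * K) < 1 / K := by
    apply one_div_lt_one_div_of_lt hKpos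
    linarith
  have hbne : b ≠ a i := by
    intro hbeq
    rw [hbeq] at hbK
    linarith
  set a' : ActProf A := Function.update a i b with ha'
  have hdiff : ∃! j : ι, a j ≠ a' j := by
    refine ⟨i, ?_, ?_⟩
    · show a i ≠ a' i
      rw [ha', Function.update_self]
      exact fun h => hbne h.symm
    · intro j hj
      by_contra hji
      exact hj (Function.update_of_ne hji b a).symm
  have ha'exit : G.IsExit C s a' := by
    refine ⟨hsC, ?_⟩
    rcases lt_or_eq_of_le (aux_qD_le_one G s a' C) with h | h
    · exact h
    · exact absurd ⟨a', h, hdiff⟩ H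
  -- product decomposition
  set P : ℝ := ∏ k ∈ Finset.univ.erase i, (y k).1 (a k) with hP
  have hPnn : 0 ≤ P := Finset.prod_nonneg fun k _ => (y k).2.1 _
  have hpa : (prodDist y).1 a = (y i).1 (a i) * P := by
    rw [aux_prodDist_apply, hP,
      ← Finset.mul_prod_erase Finset.univ (fun k => (y k).1 (a k)) (Finset.mem_univ i)]
  have hpa' : (prodDist y).1 a' = (y i).1 b * P := by
    rw [aux_prodDist_apply, hP,
      ← Finset.mul_prod_erase Finset.univ (fun k => (y k).1 (a' k)) (Finset.mem_univ i)]
    congr 1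
    · rw [ha', Function.update_self]
    · refine Finset.prod_congr rfl fun k hk => ?_
      rw [ha', Function.update_of_ne (Finset.ne_of_mem_erase hk)]
  have hstep : (prodDist y).1 a ≤ (K : ℝ) * ε * (prodDist y).1 a' := by
    rw [hpa, hpa']
    have h1 : (y i).1 (a i) * P ≤ ε * P :=
      mul_le_mul_of_nonneg_right (le_of_lt hyi) hPnn
    have h2 : (1 : ℝ) * (ε * P) ≤ ((K : ℝ) * (y i).1 b) * (ε * P) := by
      exact mul_le_mul_of_nonneg_right hKyb (mul_nonneg (le_of_lt hε) hPnn)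
    calc (y i).1 (a i) * P ≤ ε * P := h1
      _ = 1 * (ε * P) := by ring
      _ ≤ ((K : ℝ) * (y i).1 b) * (ε * P) := h2
      _ = (K : ℝ) * ε * ((y i).1 b * P) := by ring
  refine le_trans hstep (mul_le_mul_of_nonneg_left ?_
    (mul_nonneg (le_of_lt hKpos) (le_of_lt hε)))
  have : (prodDist y).1 a' = if G.IsExit C s a' then (prodDist y).1 a' else 0 := by
    rw [if_pos ha'exit]
  rw [this]
  refine Finset.single_le_sum (f := fun a'' => if G.IsExit C s a'' then (prodDist y).1 a'' else 0)
    (fun a'' _ => ?_) (Finset.mem_univ a')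
  by_cases h : G.IsExit C s a''
  · simpa [h] using (prodDist y).2.1 a''
  · simp [h]

lemma aux_hprob_nonneg (τ : CorrStrategy ι S A) (s1 : S) :
    ∀ (l : List (S × ActProf A)) (t : S), 0 ≤ G.hprob τ s1 l t
  | [], t => by
    show (0:ℝ) ≤ if t = s1 then 1 else 0
    split
    · exact zero_le_one
    · exact le_rfl
  | p :: l, t =>
    mul_nonneg (mul_nonneg (aux_hprob_nonneg τ s1 l p.1) ((τ (l, p.1)).2.1 _))
      (G.q_nonneg _ _ _)

lemma aux_exitMu_le (τ : CorrStrategy ι S A) (s1 : S) (C : Set S) (s : S) (a : ActProf A)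
    (c : ℝ) (hc : 0 ≤ c)
    (hpt : ∀ l : List (S × ActProf A),
      (τ (l, s)).1 a ≤ c * ∑ a'' : ActProf A,
        if G.IsExit C s a'' then (τ (l, s)).1 a'' else 0) :
    G.exitMu τ s1 C s a ≤ c := by
  set T : ℕ → ℝ := fun n => ∑ f : Fin n → S × ActProf A,
    if ∀ k, ¬ G.IsExit C (f k).1 (f k).2
    then G.hprob τ s1 (List.ofFn f) s * (τ (List.ofFn f, s)).1 a else 0 with hT
  set X : ℕ → ℝ := fun n => ∑ f : Fin n → S × ActProf A,
    if ∀ k, ¬ G.IsExit C (f k).1 (f k).2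
    then ∑ p : S × ActProf A, (if G.IsExit C p.1 p.2
      then G.hprob τ s1 (List.ofFn f) p.1 * (τ (List.ofFn f, p.1)).1 p.2 else 0) else 0 with hX
  set M : ℕ → ℝ := fun n => ∑ f : Fin n → S × ActProf A,
    if ∀ k, ¬ G.IsExit C (f k).1 (f k).2
    then ∑ t : S, G.hprob τ s1 (List.ofFn f) t else 0 with hM
  have hT0 : ∀ n, 0 ≤ T n := by
    intro n
    refine Finset.sum_nonneg fun f _ => ?_
    split
    · exact mul_nonneg (aux_hprob_nonneg G τ s1 _ _) ((τ _).2.1 _)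
    · exact le_rfl
  have hM0 : M 0 = 1 := by
    have hone : ∀ f : Fin 0 → S × ActProf A,
        (if ∀ k : Fin 0, ¬ G.IsExit C (f k).1 (f k).2
          then ∑ t : S, G.hprob τ s1 (List.ofFn f) t else 0) = 1 := by
      intro f
      rw [if_pos (fun k => k.elim0)]
      have hnil : List.ofFn f = [] := List.ofFn_zero
      rw [hnil]
      have hone' : ∀ t : S, G.hprob τ s1 [] t = if t = s1 then (1:ℝ) else 0 := fun t => rfl
      rw [Finset.sum_congr rfl fun t _ => hone' t,
        Finset.sum_ite_eq' Finset.univ s1 (fun _ => (1:ℝ)), if_pos (Finset.mem_univ s1)]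
    rw [hM]
    dsimp only
    rw [Finset.sum_congr rfl fun f _ => hone f, Finset.sum_const, Finset.card_univ]
    simp
  have key : ∀ n, M (n+1) = ∑ g : Fin n → S × ActProf A, ∑ p : S × ActProf A,
      if (¬ G.IsExit C p.1 p.2 ∧ ∀ k, ¬ G.IsExit C (g k).1 (g k).2)
      then G.hprob τ s1 (List.ofFn g) p.1 * (τ (List.ofFn g, p.1)).1 p.2 else 0 := by
    intro n
    rw [hM]
    dsimp only
    rw [← Equiv.sum_comp (Fin.consEquiv (fun _ : Fin (n+1) => S × ActProf A))]
    rw [Fintype.sum_prod_type]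
    rw [Finset.sum_comm]
    refine Finset.sum_congr rfl fun g _ => Finset.sum_congr rfl fun p _ => ?_
    have hcons : List.ofFn ((Fin.consEquiv (fun _ : Fin (n+1) => S × ActProf A)) (p, g))
        = p :: List.ofFn g := by
      rw [List.ofFn_succ]
      simp [Fin.consEquiv]
    have hcond : (∀ k : Fin (n+1),
        ¬ G.IsExit C (((Fin.consEquiv (fun _ : Fin (n+1) => S × ActProf A)) (p, g)) k).1
          (((Fin.consEquiv (fun _ : Fin (n+1) => S × ActProf A)) (p, g)) k).2)
        ↔ (¬ G.IsExit C p.1 p.2 ∧ ∀ k : Fin n, ¬ G.IsExit C (g k).1 (g k).2) := by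
      rw [Fin.forall_fin_succ]
      simp [Fin.consEquiv]
    rw [if_congr hcond rfl rfl]
    by_cases h : (¬ G.IsExit C p.1 p.2 ∧ ∀ k, ¬ G.IsExit C (g k).1 (g k).2)
    · rw [if_pos h, if_pos h, hcons]
      have : ∀ t : S, G.hprob τ s1 (p :: List.ofFn g) t
          = G.hprob τ s1 (List.ofFn g) p.1 * (τ (List.ofFn g, p.1)).1 p.2 * G.q p.1 p.2 t :=
        fun t => rfl
      rw [Finset.sum_congr rfl fun t _ => this t, ← Finset.mul_sum, G.q_sum, mul_one]
    · rw [if_neg h, if_neg h]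
  have hrec : ∀ n, M n = M (n+1) + X n := by
    intro n
    rw [key, hX, hM]
    dsimp only
    rw [← Finset.sum_add_distrib]
    refine Finset.sum_congr rfl fun g _ => ?_
    by_cases h : ∀ k, ¬ G.IsExit C (g k).1 (g k).2
    · rw [if_pos h, if_pos h]
      have hsplit : ∀ p : S × ActProf A,
          (if (¬ G.IsExit C p.1 p.2 ∧ ∀ k, ¬ G.IsExit C (g k).1 (g k).2)
            then G.hprob τ s1 (List.ofFn g) p.1 * (τ (List.ofFn g, p.1)).1 p.2 else 0)
          + (if G.IsExit C p.1 p.2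
            then G.hprob τ s1 (List.ofFn g) p.1 * (τ (List.ofFn g, p.1)).1 p.2 else 0)
          = G.hprob τ s1 (List.ofFn g) p.1 * (τ (List.ofFn g, p.1)).1 p.2 := by
        intro p
        by_cases hp : G.IsExit C p.1 p.2
        · rw [if_neg (fun hcon => hcon.1 hp), if_pos hp, zero_add]
        · rw [if_pos ⟨hp, h⟩, if_neg hp, add_zero]
      rw [Finset.sum_add_distrib.symm, Finset.sum_congr rfl fun p _ => hsplit p]
      rw [Fintype.sum_prod_type]
      refine Finset.sum_congr rfl fun t _ => ?_
      dsimp only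
      rw [← Finset.mul_sum, (τ (List.ofFn g, t)).2.2, mul_one]
    · rw [if_neg h, if_neg h, add_zero]
      exact (Finset.sum_eq_zero fun p _ => if_neg (fun hcon => h hcon.2)).symm
  have hXnn : ∀ n, 0 ≤ X n := by
    intro n
    refine Finset.sum_nonneg fun f _ => ?_
    split
    · refine Finset.sum_nonneg fun p _ => ?_
      split
      · exact mul_nonneg (aux_hprob_nonneg G τ s1 _ _) ((τ _).2.1 _)
      · exact le_rfl
    · exact le_rfl
  have hMnn : ∀ n, 0 ≤ M n := by
    intro n
    refine Finset.sum_nonneg fun f _ => ?_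
    split
    · exact Finset.sum_nonneg fun t _ => aux_hprob_nonneg G τ s1 _ _
    · exact le_rfl
  have hTX : ∀ n, T n ≤ c * X n := by
    intro n
    rw [hT, hX]
    dsimp only
    rw [Finset.mul_sum]
    refine Finset.sum_le_sum fun f _ => ?_
    by_cases h : ∀ k, ¬ G.IsExit C (f k).1 (f k).2
    · rw [if_pos h, if_pos h]
      have h1 : G.hprob τ s1 (List.ofFn f) s * (τ (List.ofFn f, s)).1 a
          ≤ c * ∑ a'' : ActProf A, (if G.IsExit C s a''
            then G.hprob τ s1 (List.ofFn f) s * (τ (List.ofFn f, s)).1 a'' else 0) := by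
        calc G.hprob τ s1 (List.ofFn f) s * (τ (List.ofFn f, s)).1 a
            ≤ G.hprob τ s1 (List.ofFn f) s * (c * ∑ a'' : ActProf A,
              if G.IsExit C s a'' then (τ (List.ofFn f, s)).1 a'' else 0) :=
            mul_le_mul_of_nonneg_left (hpt (List.ofFn f)) (aux_hprob_nonneg G τ s1 _ _)
          _ = c * ∑ a'' : ActProf A, (if G.IsExit C s a''
              then G.hprob τ s1 (List.ofFn f) s * (τ (List.ofFn f, s)).1 a'' else 0) := by
            rw [Finset.mul_sum, Finset.mul_sum, Finset.mul_sum]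
            refine Finset.sum_congr rfl fun a'' _ => ?_
            by_cases ha'' : G.IsExit C s a''
            · rw [if_pos ha'', if_pos ha'']; ring
            · rw [if_neg ha'', if_neg ha'']; ring
      refine le_trans h1 (mul_le_mul_of_nonneg_left ?_ hc)
      have h2 : ∑ p : S × ActProf A, (if G.IsExit C p.1 p.2
          then G.hprob τ s1 (List.ofFn f) p.1 * (τ (List.ofFn f, p.1)).1 p.2 else 0)
          = ∑ t : S, ∑ a'' : ActProf A, (if G.IsExit C t a''
          then G.hprob τ s1 (List.ofFn f) t * (τ (List.ofFn f, t)).1 a'' else 0) :=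
        Fintype.sum_prod_type _
      rw [h2]
      refine Finset.single_le_sum (f := fun t => ∑ a'' : ActProf A, (if G.IsExit C t a''
          then G.hprob τ s1 (List.ofFn f) t * (τ (List.ofFn f, t)).1 a'' else 0))
        (fun t _ => Finset.sum_nonneg fun a'' _ => ?_) (Finset.mem_univ s)
      split
      · exact mul_nonneg (aux_hprob_nonneg G τ s1 _ _) ((τ _).2.1 _)
      · exact le_rfl
    · rw [if_neg h, if_neg h, mul_zero]
  have hXsum : ∀ N, ∑ n ∈ Finset.range N, X n = 1 - M N := by
    intro N
    induction N with
    | zero => rw [Finset.range_zero, Finset.sum_empty, hM0]; ring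
    | succ N ih =>
      rw [Finset.sum_range_succ, ih]
      have := hrec N
      linarith
  have hTpartial : ∀ N, ∑ n ∈ Finset.range N, T n ≤ c := by
    intro N
    calc ∑ n ∈ Finset.range N, T n ≤ ∑ n ∈ Finset.range N, c * X n :=
        Finset.sum_le_sum fun n _ => hTX n
      _ = c * (1 - M N) := by rw [← Finset.mul_sum, hXsum]
      _ ≤ c * 1 := mul_le_mul_of_nonneg_left (by linarith [hMnn N]) hc
      _ = c := mul_one c
  have hfinal : G.exitMu τ s1 C s a = ∑' n, T n := rfl
  rw [hfinal]
  exact Summable.tsum_le_of_sum_range_le (summable_of_sum_range_le hT0 hTpartial) hTpartial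

end Aux

open StochGame in
/-- If `(s, a)` is an exit from a communicating set `C` whose limit exit probability
under a family of ε-perturbations of `E` is positive, then there is an action profile
`a'` that keeps the play in `C` and differs from `a` in the action of exactly one
player. -/
theorem exit_with_positive_limit_probability_has_unilateral_stay
    {ι S : Type*} {A : ι → Type*} [Fintype ι] [DecidableEq ι] [Fintype S]
    [∀ i, Fintype (A i)] [Nonempty ι] [Nonempty S] [∀ i, Nonempty (A i)]
    (G : StochGame ι S A) (hu : ∀ i s a, |G.u i s a| ≤ 1)
    (C : Set S) (hC : G.CommUnderE C) (s1 : S) (hs1 : s1 ∈ C)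
    (σ : ℝ → Profile ι S A) (hper : ∀ ε : ℝ, 0 < ε → G.Perturb ε (σ ε))
    (hlim : ∀ (s : S) (a : ActProf A), G.IsExit C s a → ∃ m : ℝ,
      Filter.Tendsto (fun ε => G.exitMu (corrOf (σ ε)) s1 C s a)
        (nhdsWithin 0 (Set.Ioi (0 : ℝ))) (nhds m))
    (s : S) (a : ActProf A) (hexit : G.IsExit C s a)
    (m : ℝ)
    (hm : Filter.Tendsto (fun ε => G.exitMu (corrOf (σ ε)) s1 C s a)
      (nhdsWithin 0 (Set.Ioi (0 : ℝ))) (nhds m))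
    (hmpos : 0 < m) :
    ∃ a' : ActProf A, G.qD s a' C = 1 ∧ ∃! i : ι, a i ≠ a' i := by
  by_contra H
  set K : ℕ := Finset.univ.sup (fun i : ι => Fintype.card (A i)) with hKdef
  have hK : ∀ i : ι, Fintype.card (A i) ≤ K := fun i =>
    Finset.le_sup (f := fun i : ι => Fintype.card (A i)) (Finset.mem_univ i)
  have hK1 : 1 ≤ K := le_trans Fintype.card_pos (hK (Classical.arbitrary ι))
  have hKpos : (0:ℝ) < K := by exact_mod_cast Nat.lt_of_lt_of_le Nat.zero_lt_one hK1
  have hε0 : (0:ℝ) < 1 / (2*K) := by positivity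
  have hub : ∀ ε : ℝ, 0 < ε → ε ≤ 1/(2*K) →
      G.exitMu (corrOf (σ ε)) s1 C s a ≤ (K:ℝ) * ε := by
    intro ε hεp hεle
    refine aux_exitMu_le G _ s1 C s a _ (mul_nonneg hKpos.le hεp.le) ?_
    intro l
    exact aux_pointwise G C s a hexit.1 hC.2.1 hexit.2 H K hK hK1 ε hεp hεle
      (fun i => σ ε i (l, s)) (hper ε hεp (l, s))
  have hev : ∀ᶠ ε in nhdsWithin (0:ℝ) (Set.Ioi 0),
      G.exitMu (corrOf (σ ε)) s1 C s a ≤ (K:ℝ) * ε := by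
    filter_upwards [Ioc_mem_nhdsGT_of_mem (Set.mem_Ico.2 ⟨le_refl (0:ℝ), hε0⟩)] with ε hε
    exact hub ε hε.1 hε.2
  have htend : Filter.Tendsto (fun ε : ℝ => (K:ℝ) * ε) (nhdsWithin 0 (Set.Ioi 0)) (nhds 0) := by
    have h1 : Filter.Tendsto (fun ε : ℝ => (K:ℝ) * ε) (nhds 0) (nhds ((K:ℝ) * 0)) :=
      (continuous_const.mul continuous_id).tendsto 0
    rw [mul_zero] at h1
    exact h1.mono_left nhdsWithin_le_nhds
  have hm0 : m ≤ 0 := le_of_tendsto_of_tendsto hm htend hev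
  linarith
end
end
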